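/- arXiv:2504.03898 — 4 statements merged into one kernel-verified Lean document; each statement's English description precedes it below -/
import Mathlib

section
/- For all integers n ≥ 2 and k (with the convention ψ_{m,j} = 0 for j < 0), the numbers ψ_{n,k} satisfy the recurrence ψ_{n,k} = (2n − 2k + 1)·ψ_{n−1,k−1} + (2k + 1)·ψ_{n−1,k}, with initial conditions ψ_{1,0} = 1 and ψ_{1,k} = 0 for k ≠ 0. -/
open scoped Classical

/-- A signed permutation of length `n`: a permutation `w` of `ℤ` with
`w(-i) = -w(i)` that fixes every integer of absolute value greater than `n`. -/
def IsSignedPerm (n : ℕ) (w : Equiv.Perm ℤ) : Prop :=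
  (∀ i : ℤ, w (-i) = - w i) ∧ ∀ i : ℤ, (n : ℤ) < |i| → w i = i

/-- Membership in `X_n := {w ∈ 𝔅_n : w⁻¹(1) > 0}`. -/
def InXn (n : ℕ) (w : Equiv.Perm ℤ) : Prop :=
  IsSignedPerm n w ∧ 0 < w.symm 1

/-- The type B descent number `des_B(w) = #{i ∈ {0,…,n-1} : w_i > w_{i+1}}`,
with the convention `w_0 = 0` (automatic, since a signed permutation fixes `0`). -/
noncomputable def desB (n : ℕ) (w : Equiv.Perm ℤ) : ℕ :=
  ((Finset.range n).filter fun i => w ((i : ℤ) + 1) < w (i : ℤ)).card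

/-- The flag-excedance `fexc(w) = 2·#{i : w_i > i} + #{i : w_i < 0}`. -/
noncomputable def fexc (n : ℕ) (w : Equiv.Perm ℤ) : ℕ :=
  2 * ((Finset.Icc (1 : ℤ) (n : ℤ)).filter fun i => i < w i).card
    + ((Finset.Icc (1 : ℤ) (n : ℤ)).filter fun i => w i < 0).card

/-- The cyclic successor on `{-n,…,-1,1,…,n}` (with `(-1)⁺ = 1` and `n⁺ = -n`). -/
def csucc (n : ℕ) (i : ℤ) : ℤ :=
  if i = -1 then 1 else if i = (n : ℤ) then -(n : ℤ) else i + 1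

/-- The circular descent set `CDes(w) = {i ∈ {-n,…,-1,1,…,n} : w(i) > w(i⁺)}`. -/
noncomputable def cdesSet (n : ℕ) (w : Equiv.Perm ℤ) : Finset ℤ :=
  (Finset.Icc (-(n : ℤ)) (n : ℤ)).filter fun i => i ≠ 0 ∧ w (csucc n i) < w i

/-- The circular descent number `cdes(w) = |CDes(w)|`. -/
noncomputable def cdes (n : ℕ) (w : Equiv.Perm ℤ) : ℕ := (cdesSet n w).card

/-- `a ≪ b`: there is a nonzero integer strictly between `a` and `b`. -/
def Lll (a b : ℤ) : Prop := ∃ c : ℤ, c ≠ 0 ∧ a < c ∧ c < b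

/-- The big ascent number `basc(w) = |BAsc(w)|`, where `BAsc(w) ⊆ {-1,1,…,n}`:
`-1 ∈ BAsc(w)` iff `w_1 ≥ 2`; for `1 ≤ i ≤ n-1`, `i ∈ BAsc(w)` iff `w_i ≪ w_{i+1}`;
and `n ∈ BAsc(w)` iff `w_n ≤ -2`. -/
noncomputable def basc (n : ℕ) (w : Equiv.Perm ℤ) : ℕ :=
  ((insert (-1 : ℤ) (Finset.Icc (1 : ℤ) (n : ℤ))).filter fun i =>
    if i = -1 then 2 ≤ w 1
    else if i = (n : ℤ) then w (n : ℤ) ≤ -2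
    else Lll (w i) (w (i + 1))).card

/-- `L'_{n,k}(r)`: the number of half-integer points in the `r`-th dilate of the
half-open type C hypersimplex `Δ'_{C_n,k}`, in the `y`-coordinates. -/
noncomputable def Lp (n k r : ℕ) : ℕ :=
  if k = 1 then
    Set.ncard {y : Fin n → ℤ |
      (∀ j, 0 ≤ y j ∧ y j ≤ 2 * (r : ℤ)) ∧ (∀ j : Fin n, (j : ℕ) = 0 → y j ≤ (r : ℤ)) ∧
      0 ≤ ∑ j, y j ∧ ∑ j, y j ≤ (r : ℤ)}
  else
    Set.ncard {y : Fin n → ℤ |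
      (∀ j, 0 ≤ y j ∧ y j ≤ 2 * (r : ℤ)) ∧ (∀ j : Fin n, (j : ℕ) = 0 → y j ≤ (r : ℤ)) ∧
      ((k : ℤ) - 1) * r < ∑ j, y j ∧ ∑ j, y j ≤ (k : ℤ) * r}

/-- `L_{n,k}(r)`: the number of half-integer points in the `r`-th dilate of the
closed type C hypersimplex `Δ_{C_n,k}`, in the `y`-coordinates. -/
noncomputable def Lc (n k r : ℕ) : ℕ :=
  Set.ncard {y : Fin n → ℤ |
    (∀ j, 0 ≤ y j ∧ y j ≤ 2 * (r : ℤ)) ∧ (∀ j : Fin n, (j : ℕ) = 0 → y j ≤ (r : ℤ)) ∧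
    ((k : ℤ) - 1) * r ≤ ∑ j, y j ∧ ∑ j, y j ≤ (k : ℤ) * r}

/-- `ψ_{n,k} = #{w ∈ X_n : basc(w) = k}`. -/
noncomputable def psiN (n k : ℕ) : ℕ :=
  {w : Equiv.Perm ℤ | InXn n w ∧ basc n w = k}.ncard

/-- `ψ_{n,k}` with an integer index (`0` for negative `k`). -/
noncomputable def psiZ (n : ℕ) (k : ℤ) : ℕ :=
  {w : Equiv.Perm ℤ | InXn n w ∧ (basc n w : ℤ) = k}.ncard

/-- `Ψ_{C_n}(t) = Σ_k ψ_{n,k} t^k ∈ ℤ[t]`. -/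
noncomputable def PsiC (n : ℕ) : Polynomial ℤ :=
  ∑ᶠ k : ℕ, (psiN n k : Polynomial ℤ) * Polynomial.X ^ k

/-- `Ψ_{C_n}(t)` with rational coefficients. -/
noncomputable def PsiCQ (n : ℕ) : Polynomial ℚ :=
  ∑ᶠ k : ℕ, (psiN n k : Polynomial ℚ) * Polynomial.X ^ k

/-- The descent number of a permutation of `{1,…,m}`. -/
noncomputable def desA (m : ℕ) (σ : Equiv.Perm (Fin m)) : ℕ :=
  (Finset.univ.filter fun i : Fin m =>
    ∃ h : (i : ℕ) + 1 < m, σ ⟨(i : ℕ) + 1, h⟩ < σ i).card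

/-- The classical (type A) Eulerian polynomial `E_m^A(t) = Σ_{σ ∈ S_m} t^{des σ}`. -/
noncomputable def EulerianA (m : ℕ) : Polynomial ℚ :=
  ∑ σ : Equiv.Perm (Fin m), Polynomial.X ^ desA m σ

/-- The relation `u ⇀ w` on `X_n`. -/
def covRel (n : ℕ) (u w : Equiv.Perm ℤ) : Prop :=
  InXn n u ∧ InXn n w ∧
    ((2 ≤ w 1 ∧ u = w * Equiv.swap (1 : ℤ) (-1)) ∨
     (∃ i : ℤ, 1 ≤ i ∧ i ≤ (n : ℤ) - 1 ∧ Lll (w i) (w (i + 1)) ∧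
        u = w * (Equiv.swap i (i + 1) * Equiv.swap (-i) (-(i + 1)))) ∨
     (w (n : ℤ) ≤ -2 ∧ u = w * Equiv.swap (n : ℤ) (-(n : ℤ))))

/-- The `i`-th coordinate (`1 ≤ i ≤ n`) of the vertex `v^j(w)` (`1 ≤ j ≤ n+1`):
`v^{n+1}_i(w) = #({1,…,i-1} ∩ CDes(w⁻¹))` and `v^j = v^{j+1} + ½ e_{w_j}`. -/
noncomputable def vcoord (n : ℕ) (w : Equiv.Perm ℤ) (j : ℕ) (i : ℕ) : ℚ :=
  ((Finset.Icc (1 : ℤ) ((i : ℤ) - 1) ∩ cdesSet n w.symm).card : ℚ)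
    + (1 / 2) * ∑ m ∈ Finset.Icc (j : ℤ) (n : ℤ),
        (if w m = (i : ℤ) then (1 : ℚ) else if w m = -(i : ℤ) then -1 else 0)

/-- `u` is the image `τ_n(w)`: in window notation `u = 1 w'_1 ⋯ w'_n`, where
`w'_i = w_i + 1` if `w_i > 0` and `w'_i = w_i - 1` if `w_i < 0`. -/
def isTau (n : ℕ) (w u : Equiv.Perm ℤ) : Prop :=
  u 1 = 1 ∧ ∀ i : ℤ, 1 ≤ i → i ≤ (n : ℤ) →
    u (i + 1) = if 0 < w i then w i + 1 else w i - 1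

def lll (a b : ℤ) : Prop := a + 2 ≤ b ∧ ¬(a = -1 ∧ b = 1)

instance (a b : ℤ) : Decidable (lll a b) := by unfold lll; infer_instance

theorem Lll_iff {a b : ℤ} : Lll a b ↔ lll a b := by
  constructor
  · rintro ⟨c, hc0, h1, h2⟩
    exact ⟨by omega, by rintro ⟨rfl, rfl⟩; omega⟩
  · rintro ⟨h1, h2⟩
    by_cases h : a = -1
    · exact ⟨1, by omega, by omega, by omega⟩
    · exact ⟨a + 1, by omega, by omega, by omega⟩

/-- extended window entry: `ext l 0 = 0`, `ext l i = l[i-1]` (0 out of range). -/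
def extL (l : List ℤ) (i : ℕ) : ℤ := if i = 0 then 0 else l.getD (i - 1) 0

/-- big ascent count of a window. -/
def bw (l : List ℤ) : ℕ :=
  ∑ i ∈ Finset.range (l.length + 1), if lll (extL l i) (extL l (i + 1)) then 1 else 0

theorem child_getD (g : List ℤ) (p : ℕ) (hp : p ≤ g.length) (s : ℤ) (j : ℕ) :
    (g.take p ++ s :: g.drop p).getD j 0 =
      if j < p then g.getD j 0 else if j = p then s else g.getD (j - 1) 0 := by
  have hlen : (g.take p).length = p := by simp [List.length_take]; omega
  rcases lt_trichotomy j p with h | h | h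
  · rw [if_pos h]
    rw [List.getD_eq_getElem?_getD, List.getElem?_append, if_pos (by omega),
      List.getElem?_take_of_lt h, List.getD_eq_getElem?_getD]
  · subst h
    rw [if_neg (by omega), if_pos rfl]
    rw [List.getD_eq_getElem?_getD, List.getElem?_append_right (by omega)]
    simp [hlen]
  · rw [if_neg (by omega), if_neg (by omega)]
    rw [List.getD_eq_getElem?_getD, List.getElem?_append_right (by omega), hlen]
    obtain ⟨k, hk⟩ : ∃ k, j - p = k + 1 := ⟨j - p - 1, by omega⟩
    rw [hk, List.getElem?_cons_succ, List.getElem?_drop]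
    rw [List.getD_eq_getElem?_getD]
    congr 2
    omega

theorem extL_child (g : List ℤ) (p : ℕ) (hp : p ≤ g.length) (s : ℤ) (q : ℕ) :
    extL (g.take p ++ s :: g.drop p) q =
      if q ≤ p then extL g q else if q = p + 1 then s else extL g (q - 1) := by
  rcases Nat.eq_zero_or_pos q with rfl | hq
  · simp [extL]
  · unfold extL
    rw [if_neg (by omega), child_getD g p hp s (q - 1)]
    rcases lt_trichotomy q (p+1) with h | h | h
    · -- q ≤ p
      rw [if_pos (by omega : q - 1 < p), if_pos (by omega : q ≤ p), if_neg (by omega : ¬ q = 0)]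
    · -- q = p + 1
      rw [if_neg (by omega : ¬ q - 1 < p), if_pos (by omega : q - 1 = p),
        if_neg (by omega : ¬ q ≤ p), if_pos h]
    · -- q ≥ p + 2
      rw [if_neg (by omega : ¬ q - 1 < p), if_neg (by omega : ¬ q - 1 = p),
        if_neg (by omega : ¬ q ≤ p), if_neg (by omega : ¬ q = p + 1),
        if_neg (by omega : ¬ q - 1 = 0)]

theorem bw_child (g : List ℤ) (p : ℕ) (hp : p ≤ g.length) (s : ℤ) :
    bw (g.take p ++ s :: g.drop p)
      + (if lll (extL g p) (extL g (p + 1)) then 1 else 0)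
    = bw g + (if lll (extL g p) s then 1 else 0)
      + (if lll s (extL g (p + 1)) then 1 else 0) := by
  set m := g.length with hm
  have hlen : (g.take p ++ s :: g.drop p).length = m + 1 := by
    simp only [List.length_append, List.length_take, List.length_cons, List.length_drop]
    omega
  set f : ℕ → ℕ := fun i => if lll (extL g i) (extL g (i + 1)) then 1 else 0 with hf
  set A : ℕ := if lll (extL g p) s then 1 else 0 with hA
  set B : ℕ := if lll s (extL g (p + 1)) then 1 else 0 with hB
  set G : ℕ → ℕ := fun i =>
    if i < p then f i else if i = p then A else if i = p + 1 then B else f (i - 1) with hG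
  have hnew : bw (g.take p ++ s :: g.drop p) = ∑ i ∈ Finset.range (m + 2), G i := by
    rw [bw, hlen]
    apply Finset.sum_congr rfl
    intro i _
    rcases lt_trichotomy i p with h | h | h
    · have h1 : extL (g.take p ++ s :: g.drop p) i = extL g i := by
        rw [extL_child g p hp s i, if_pos (by omega)]
      have h2 : extL (g.take p ++ s :: g.drop p) (i + 1) = extL g (i + 1) := by
        rw [extL_child g p hp s (i + 1), if_pos (by omega)]
      have h3 : G i = f i := by simp only [hG]; rw [if_pos h]
      rw [h1, h2, h3, hf]
    · have h1 : extL (g.take p ++ s :: g.drop p) i = extL g i := by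
        rw [extL_child g p hp s i, if_pos (by omega)]
      have h2 : extL (g.take p ++ s :: g.drop p) (i + 1) = s := by
        rw [extL_child g p hp s (i + 1), if_neg (by omega), if_pos (by omega)]
      have h3 : G i = A := by
        simp only [hG]; rw [if_neg (by omega), if_pos h]
      rw [h1, h2, h3, hA, h]
    · rcases eq_or_ne i (p + 1) with h2 | h2
      · have h1 : extL (g.take p ++ s :: g.drop p) i = s := by
          rw [extL_child g p hp s i, if_neg (by omega), if_pos h2]
        have h4 : extL (g.take p ++ s :: g.drop p) (i + 1) = extL g (i + 1 - 1) := by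
          rw [extL_child g p hp s (i + 1), if_neg (by omega), if_neg (by omega)]
        have h5 : i + 1 - 1 = p + 1 := by omega
        have h3 : G i = B := by
          simp only [hG]; rw [if_neg (by omega), if_neg (by omega), if_pos h2]
        rw [h1, h4, h5, h3, hB]
      · have h1 : extL (g.take p ++ s :: g.drop p) i = extL g (i - 1) := by
          rw [extL_child g p hp s i, if_neg (by omega), if_neg h2]
        have h4 : extL (g.take p ++ s :: g.drop p) (i + 1) = extL g (i + 1 - 1) := by
          rw [extL_child g p hp s (i + 1), if_neg (by omega), if_neg (by omega)]
        have h5 : i + 1 - 1 = i - 1 + 1 := by omega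
        have h3 : G i = f (i - 1) := by
          simp only [hG]; rw [if_neg (by omega), if_neg (by omega), if_neg h2]
        rw [h1, h4, h5, h3, hf]
  have hsplit : ∑ i ∈ Finset.range (m + 2), G i
      = (∑ i ∈ Finset.range p, f i) + A + B + ∑ i ∈ Finset.Ico (p + 2) (m + 2), f (i - 1) := by
    rw [Finset.range_eq_Ico,
      ← Finset.sum_Ico_consecutive G (Nat.zero_le (p + 2)) (show p + 2 ≤ m + 2 by omega)]
    have e1 : ∑ i ∈ Finset.Ico 0 (p + 2), G i = (∑ i ∈ Finset.range p, f i) + A + B := by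
      rw [← Finset.range_eq_Ico, Finset.sum_range_succ, Finset.sum_range_succ]
      have hc : ∀ i ∈ Finset.range p, G i = f i := fun i hi => by
        simp only [hG]; rw [if_pos (Finset.mem_range.mp hi)]
      have gp : G p = A := by simp [hG]
      have gp1 : G (p + 1) = B := by simp [hG]
      rw [Finset.sum_congr rfl hc, gp, gp1]
    have e2 : ∀ i ∈ Finset.Ico (p + 2) (m + 2), G i = f (i - 1) := fun i hi => by
      rw [Finset.mem_Ico] at hi
      simp only [hG]; rw [if_neg (by omega), if_neg (by omega), if_neg (by omega)]
    rw [e1, Finset.sum_congr rfl e2, Finset.range_eq_Ico]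
  have hshift : ∑ i ∈ Finset.Ico (p + 2) (m + 2), f (i - 1)
      = ∑ i ∈ Finset.Ico (p + 1) (m + 1), f i := by
    rw [Finset.sum_Ico_eq_sum_range, Finset.sum_Ico_eq_sum_range]
    have hr : m + 2 - (p + 2) = m + 1 - (p + 1) := by omega
    rw [hr]
    apply Finset.sum_congr rfl
    intro i _
    congr 1
    omega
  have hold : bw g = (∑ i ∈ Finset.range p, f i) + f p + ∑ i ∈ Finset.Ico (p + 1) (m + 1), f i := by
    rw [bw, ← hm, Finset.range_eq_Ico,
      ← Finset.sum_Ico_consecutive f (Nat.zero_le (p + 1)) (show p + 1 ≤ m + 1 by omega),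
      ← Finset.range_eq_Ico, Finset.sum_range_succ]
  have hfp : (if lll (extL g p) (extL g (p + 1)) then 1 else 0) = f p := rfl
  rw [hnew, hsplit, hshift, hold, hfp]
  ring

/-- window property (without the `1 ∈ l` condition). -/
def WinP (m : ℕ) (l : List ℤ) : Prop :=
  l.length = m ∧ (∀ x ∈ l, x ≠ 0 ∧ x.natAbs ≤ m) ∧ (l.map Int.natAbs).Nodup

theorem getD_mem {l : List ℤ} {p : ℕ} (h : p < l.length) : l.getD p 0 ∈ l := by
  rw [List.getD_eq_getElem?_getD, List.getElem?_eq_getElem h]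
  exact List.getElem_mem h

theorem getD_default {l : List ℤ} {p : ℕ} (h : l.length ≤ p) : l.getD p 0 = 0 := by
  rw [List.getD_eq_getElem?_getD, List.getElem?_eq_none h]
  rfl

theorem WinP.ext_natAbs_le {m : ℕ} {l : List ℤ} (hl : WinP m l) (q : ℕ) :
    (extL l q).natAbs ≤ m := by
  unfold extL
  split_ifs with h
  · simp
  · rcases lt_or_ge (q - 1) l.length with h2 | h2
    · exact (hl.2.1 _ (getD_mem h2)).2
    · rw [getD_default h2]; simp

theorem getD_natAbs_inj {m : ℕ} {l : List ℤ} (hl : WinP m l) {p q : ℕ} (hp : p < m) (hq : q < m)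
    (h : (l.getD p 0).natAbs = (l.getD q 0).natAbs) : p = q := by
  obtain ⟨hlen, hb, hn⟩ := hl
  have hp' : p < l.length := by omega
  have hq' : q < l.length := by omega
  rw [List.getD_eq_getElem?_getD, List.getD_eq_getElem?_getD,
    List.getElem?_eq_getElem hp', List.getElem?_eq_getElem hq'] at h
  simp only [Option.getD_some] at h
  have hp2 : p < (l.map Int.natAbs).length := by simpa using hp'
  have hq2 : q < (l.map Int.natAbs).length := by simpa using hq'
  have h2 : (l.map Int.natAbs)[p] = (l.map Int.natAbs)[q] := by
    rw [List.getElem_map, List.getElem_map]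
    exact h
  exact (List.Nodup.getElem_inj_iff hn).mp h2

theorem exists_unique_abs {m : ℕ} {l : List ℤ} (hl : WinP m l) {v : ℕ} (hv1 : 1 ≤ v)
    (hvm : v ≤ m) :
    ∃ p, p < m ∧ (l.getD p 0).natAbs = v ∧ ∀ q, q < m → (l.getD q 0).natAbs = v → q = p := by
  have hlen := hl.1
  have hsub : (Finset.range m).image (fun p => (l.getD p 0).natAbs) ⊆ Finset.Icc 1 m := by
    intro u hu
    simp only [Finset.mem_image, Finset.mem_range] at hu
    obtain ⟨p, hp, rfl⟩ := hu
    have hmem := hl.2.1 _ (getD_mem (by omega : p < l.length))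
    simp only [Finset.mem_Icc]
    have := hmem.1
    exact ⟨by omega, hmem.2⟩
  have hcard : ((Finset.range m).image (fun p => (l.getD p 0).natAbs)).card = m := by
    rw [Finset.card_image_of_injOn, Finset.card_range]
    intro p hp q hq h
    exact getD_natAbs_inj hl (Finset.mem_range.mp hp) (Finset.mem_range.mp hq) h
  have heq : (Finset.range m).image (fun p => (l.getD p 0).natAbs) = Finset.Icc 1 m := by
    apply Finset.eq_of_subset_of_card_le hsub
    rw [hcard, Nat.card_Icc]
    omega
  have hv : v ∈ (Finset.range m).image (fun p => (l.getD p 0).natAbs) := by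
    rw [heq]; simp only [Finset.mem_Icc]; omega
  simp only [Finset.mem_image, Finset.mem_range] at hv
  obtain ⟨p, hp, hpv⟩ := hv
  exact ⟨p, hp, hpv, fun q hq hqv => getD_natAbs_inj hl hq hp (by rw [hqv, hpv])⟩

theorem extL_succ (g : List ℤ) (q : ℕ) : extL g (q + 1) = g.getD q 0 := by simp [extL]

theorem extL_zero (g : List ℤ) : extL g 0 = 0 := by simp [extL]

theorem cntone {m : ℕ} (hm : 1 ≤ m) {g : List ℤ} (hg : WinP m g) :
    (∑ p ∈ Finset.range (m + 1),
      ((if extL g p = (m : ℤ) then 1 else 0) + (if extL g (p + 1) = -(m : ℤ) then 1 else 0))) = 1 := by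
  obtain ⟨p₀, hp₀, hv₀, huniq⟩ := exists_unique_abs hg hm (le_refl m)
  have hL : g.length = m := hg.1
  rw [Finset.sum_add_distrib]
  have e1 : (∑ p ∈ Finset.range (m + 1), if extL g p = (m : ℤ) then 1 else 0)
      = ∑ q ∈ Finset.range m, (if g.getD q 0 = (m : ℤ) then 1 else 0) := by
    rw [Finset.sum_range_succ']
    simp only [extL_succ, extL_zero]
    rw [if_neg (by omega : ¬ (0 : ℤ) = (m : ℤ)), add_zero]
  have e2 : (∑ p ∈ Finset.range (m + 1), if extL g (p + 1) = -(m : ℤ) then 1 else 0)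
      = ∑ q ∈ Finset.range m, (if g.getD q 0 = -(m : ℤ) then 1 else 0) := by
    rw [Finset.sum_range_succ]
    simp only [extL_succ]
    rw [getD_default (by omega), if_neg (by omega : ¬ (0 : ℤ) = -(m : ℤ)), add_zero]
  rw [e1, e2, ← Finset.sum_add_distrib]
  have e3 : ∀ q ∈ Finset.range m,
      ((if g.getD q 0 = (m : ℤ) then 1 else 0) + (if g.getD q 0 = -(m : ℤ) then 1 else 0))
      = (if (g.getD q 0).natAbs = m then 1 else 0) := by
    intro q _
    split_ifs <;> omega
  rw [Finset.sum_congr rfl e3, ← Finset.card_filter]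
  have e4 : (Finset.range m).filter (fun q => (g.getD q 0).natAbs = m) = {p₀} := by
    ext q
    simp only [Finset.mem_filter, Finset.mem_range, Finset.mem_singleton]
    constructor
    · rintro ⟨h1, h2⟩
      exact huniq q h1 h2
    · rintro rfl
      exact ⟨hp₀, hv₀⟩
  rw [e4, Finset.card_singleton]

theorem parent_count {m : ℕ} (hm : 1 ≤ m) {g : List ℤ} (hg : WinP m g) (k : ℕ) :
    (∑ p ∈ Finset.range (m + 1),
        ((if bw (g.take p ++ ((m : ℤ) + 1) :: g.drop p) = k then 1 else 0)
          + (if bw (g.take p ++ (-((m : ℤ) + 1)) :: g.drop p) = k then 1 else 0)))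
    = (if bw g = k then 2 * k + 1 else 0)
      + (if bw g + 1 = k then 2 * (m + 1) - (2 * bw g + 1) else 0) := by
  have hL : g.length = m := hg.1
  set j := bw g with hj
  have habs : ∀ q, (extL g q).natAbs ≤ m := hg.ext_natAbs_le
  have hplus : ∀ p ∈ Finset.range (m + 1), bw (g.take p ++ ((m : ℤ) + 1) :: g.drop p)
      = if lll (extL g p) (extL g (p + 1)) ∨ extL g p = (m : ℤ) then j else j + 1 := by
    intro p hp
    rw [Finset.mem_range] at hp
    have hbc := bw_child g p (by omega) ((m : ℤ) + 1)
    have ha := habs p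
    have hb := habs (p + 1)
    have h1 : ¬ lll ((m : ℤ) + 1) (extL g (p + 1)) := by unfold lll; omega
    have h2 : lll (extL g p) ((m : ℤ) + 1) ↔ extL g p ≠ (m : ℤ) := by unfold lll; omega
    by_cases hab : lll (extL g p) (extL g (p + 1))
    · have hne : extL g p ≠ (m : ℤ) := by unfold lll at hab; omega
      rw [if_pos (Or.inl hab)]
      rw [if_pos hab, if_pos (h2.mpr hne), if_neg h1] at hbc
      omega
    · by_cases ham : extL g p = (m : ℤ)
      · rw [if_pos (Or.inr ham)]
        rw [if_neg hab, if_neg (fun hc => (h2.mp hc) ham), if_neg h1] at hbc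
        omega
      · rw [if_neg (by tauto)]
        rw [if_neg hab, if_pos (h2.mpr ham), if_neg h1] at hbc
        omega
  have hminus : ∀ p ∈ Finset.range (m + 1), bw (g.take p ++ (-((m : ℤ) + 1)) :: g.drop p)
      = if lll (extL g p) (extL g (p + 1)) ∨ extL g (p + 1) = -(m : ℤ) then j else j + 1 := by
    intro p hp
    rw [Finset.mem_range] at hp
    have hbc := bw_child g p (by omega) (-((m : ℤ) + 1))
    have ha := habs p
    have hb := habs (p + 1)
    have h1 : ¬ lll (extL g p) (-((m : ℤ) + 1)) := by unfold lll; omega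
    have h2 : lll (-((m : ℤ) + 1)) (extL g (p + 1)) ↔ extL g (p + 1) ≠ -(m : ℤ) := by
      unfold lll; omega
    by_cases hab : lll (extL g p) (extL g (p + 1))
    · have hne : extL g (p + 1) ≠ -(m : ℤ) := by unfold lll at hab; omega
      rw [if_pos (Or.inl hab)]
      rw [if_pos hab, if_neg h1, if_pos (h2.mpr hne)] at hbc
      omega
    · by_cases ham : extL g (p + 1) = -(m : ℤ)
      · rw [if_pos (Or.inr ham)]
        rw [if_neg hab, if_neg h1, if_neg (fun hc => (h2.mp hc) ham)] at hbc
        omega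
      · rw [if_neg (by tauto)]
        rw [if_neg hab, if_neg h1, if_pos (h2.mpr ham)] at hbc
        omega
  have hstay : (∑ p ∈ Finset.range (m + 1),
      ((if lll (extL g p) (extL g (p + 1)) ∨ extL g p = (m : ℤ) then 1 else 0)
        + (if lll (extL g p) (extL g (p + 1)) ∨ extL g (p + 1) = -(m : ℤ) then 1 else 0)))
      = 2 * j + 1 := by
    have hsplit : ∀ p ∈ Finset.range (m + 1),
        ((if lll (extL g p) (extL g (p + 1)) ∨ extL g p = (m : ℤ) then (1:ℕ) else 0)
          + (if lll (extL g p) (extL g (p + 1)) ∨ extL g (p + 1) = -(m : ℤ) then 1 else 0))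
        = (2 * (if lll (extL g p) (extL g (p + 1)) then 1 else 0)
            + ((if extL g p = (m : ℤ) then 1 else 0)
              + (if extL g (p + 1) = -(m : ℤ) then 1 else 0))) := by
      intro p _
      have ha := habs p
      have hb := habs (p + 1)
      by_cases hab : lll (extL g p) (extL g (p + 1))
      · have h5 : extL g p ≠ (m : ℤ) ∧ extL g (p + 1) ≠ -(m : ℤ) := by
          unfold lll at hab; constructor <;> omega
        rw [if_pos (Or.inl hab), if_pos (Or.inl hab), if_pos hab, if_neg h5.1, if_neg h5.2]
      · have hc1 : (lll (extL g p) (extL g (p + 1)) ∨ extL g p = (m : ℤ))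
            ↔ (extL g p = (m : ℤ)) := by tauto
        have hc2 : (lll (extL g p) (extL g (p + 1)) ∨ extL g (p + 1) = -(m : ℤ))
            ↔ (extL g (p + 1) = -(m : ℤ)) := by tauto
        rw [if_congr hc1 rfl rfl, if_congr hc2 rfl rfl, if_neg hab]
        ring
    rw [Finset.sum_congr rfl hsplit, Finset.sum_add_distrib, ← Finset.mul_sum,
      cntone hm hg]
    have hbwg : (∑ p ∈ Finset.range (m + 1),
        if lll (extL g p) (extL g (p + 1)) then (1:ℕ) else 0) = j := by
      rw [hj, bw, hL]
    rw [hbwg]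
  rcases eq_or_ne k j with rfl | hkj
  · -- k = j
    rw [if_pos rfl, if_neg (by omega)]
    have e : ∀ p ∈ Finset.range (m + 1),
        ((if bw (g.take p ++ ((m : ℤ) + 1) :: g.drop p) = j then (1:ℕ) else 0)
          + (if bw (g.take p ++ (-((m : ℤ) + 1)) :: g.drop p) = j then 1 else 0))
        = ((if lll (extL g p) (extL g (p + 1)) ∨ extL g p = (m : ℤ) then 1 else 0)
          + (if lll (extL g p) (extL g (p + 1)) ∨ extL g (p + 1) = -(m : ℤ) then 1 else 0)) := by
      intro p hp
      rw [hplus p hp, hminus p hp]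
      congr 1 <;> split_ifs <;> omega
    rw [Finset.sum_congr rfl e, hstay]
  · rcases eq_or_ne k (j + 1) with rfl | hkj1
    · -- k = j + 1
      rw [if_neg (by omega), if_pos rfl]
      have e : ∀ p ∈ Finset.range (m + 1),
          ((if bw (g.take p ++ ((m : ℤ) + 1) :: g.drop p) = j + 1 then (1:ℕ) else 0)
            + (if bw (g.take p ++ (-((m : ℤ) + 1)) :: g.drop p) = j + 1 then 1 else 0))
          = 2 - ((if lll (extL g p) (extL g (p + 1)) ∨ extL g p = (m : ℤ) then 1 else 0)
            + (if lll (extL g p) (extL g (p + 1)) ∨ extL g (p + 1) = -(m : ℤ) then 1 else 0)) := by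
        intro p hp
        rw [hplus p hp, hminus p hp]
        split_ifs <;> omega
      rw [Finset.sum_congr rfl e]
      have hle : ∀ p ∈ Finset.range (m + 1),
          ((if lll (extL g p) (extL g (p + 1)) ∨ extL g p = (m : ℤ) then (1:ℕ) else 0)
            + (if lll (extL g p) (extL g (p + 1)) ∨ extL g (p + 1) = -(m : ℤ) then 1 else 0)) ≤ 2 := by
        intro p _; split_ifs <;> omega
      rw [Finset.sum_tsub_distrib _ hle, hstay, Finset.sum_const, Finset.card_range,
        smul_eq_mul]
      omega
    · rw [if_neg (fun h => hkj h.symm), if_neg (fun h => hkj1 h.symm)]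
      apply Finset.sum_eq_zero
      intro p hp
      rw [hplus p hp, hminus p hp]
      split_ifs <;> omega

theorem bw_le_of_winP {m : ℕ} (hm : 1 ≤ m) {g : List ℤ} (hg : WinP m g) : bw g ≤ m := by
  have h := parent_count hm hg (bw g)
  rw [if_pos rfl, if_neg (by omega)] at h
  have hle : (∑ p ∈ Finset.range (m + 1),
      ((if bw (g.take p ++ ((m : ℤ) + 1) :: g.drop p) = bw g then (1:ℕ) else 0)
        + (if bw (g.take p ++ (-((m : ℤ) + 1)) :: g.drop p) = bw g then 1 else 0)))
      ≤ ∑ p ∈ Finset.range (m + 1), 2 :=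
    Finset.sum_le_sum (fun p _ => by split_ifs <;> omega)
  rw [Finset.sum_const, Finset.card_range, smul_eq_mul] at hle
  omega

def lists0 (s : Finset ℤ) : ℕ → Finset (List ℤ)
  | 0 => {[]}
  | m + 1 => (s ×ˢ lists0 s m).image fun q => q.1 :: q.2

theorem mem_lists0 {s : Finset ℤ} : ∀ {m : ℕ} {l : List ℤ},
    l ∈ lists0 s m ↔ l.length = m ∧ ∀ x ∈ l, x ∈ s := by
  intro m
  induction m with
  | zero =>
    intro l
    simp [lists0, List.length_eq_zero_iff]
    rintro rfl
    simp
  | succ m ih =>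
    intro l
    simp only [lists0, Finset.mem_image, Finset.mem_product]
    constructor
    · rintro ⟨⟨x, t⟩, ⟨hx, ht⟩, rfl⟩
      obtain ⟨hlen, hall⟩ := ih.mp ht
      refine ⟨by simp [hlen], ?_⟩
      intro y hy
      rcases List.mem_cons.mp hy with rfl | hy
      · exact hx
      · exact hall y hy
    · rintro ⟨hlen, hall⟩
      rcases l with _ | ⟨x, t⟩
      · simp at hlen
      · exact ⟨(x, t), ⟨hall x (by simp),
          ih.mpr ⟨by simpa using hlen, fun y hy => hall y (by simp [hy])⟩⟩, rfl⟩

noncomputable def WSet (m : ℕ) : Finset (List ℤ) :=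
  (lists0 (Finset.Icc (-(m : ℤ)) m) m).filter fun l =>
    (∀ x ∈ l, x ≠ 0) ∧ (l.map Int.natAbs).Nodup ∧ (1 : ℤ) ∈ l

theorem mem_WSet {m : ℕ} {l : List ℤ} :
    l ∈ WSet m ↔ WinP m l ∧ (1 : ℤ) ∈ l := by
  unfold WSet WinP
  rw [Finset.mem_filter, mem_lists0]
  constructor
  · rintro ⟨⟨h1, h2⟩, h3, h4, h5⟩
    refine ⟨⟨h1, fun x hx => ⟨h3 x hx, ?_⟩, h4⟩, h5⟩
    have := h2 x hx
    rw [Finset.mem_Icc] at this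
    omega
  · rintro ⟨⟨h1, h2, h3⟩, h4⟩
    refine ⟨⟨h1, fun x hx => ?_⟩, fun x hx => (h2 x hx).1, h3, h4⟩
    have h5 := (h2 x hx).1
    have := (h2 x hx).2
    rw [Finset.mem_Icc]
    omega

def rmv (m : ℕ) (c : List ℤ) : List ℤ := c.filter (fun x => decide (x.natAbs ≠ m + 1))

theorem child_mem {m : ℕ} (hm : 1 ≤ m) {g : List ℤ} (hg : g ∈ WSet m) {p : ℕ} (hp : p ≤ m)
    {s : ℤ} (hs : s = ((m : ℤ) + 1) ∨ s = -((m : ℤ) + 1)) :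
    (g.take p ++ s :: g.drop p) ∈ WSet (m + 1) ∧ rmv m (g.take p ++ s :: g.drop p) = g := by
  obtain ⟨⟨hlen, hb, hn⟩, h1g⟩ := mem_WSet.mp hg
  have hsabs : s.natAbs = m + 1 := by rcases hs with rfl | rfl <;> omega
  have hgle : ∀ x ∈ g, x.natAbs ≠ m + 1 := fun x hx => by have := (hb x hx).2; omega
  have hmem : ∀ x, x ∈ (g.take p ++ s :: g.drop p) ↔ x = s ∨ x ∈ g := by
    intro x
    constructor
    · intro hx
      rcases List.mem_append.mp hx with hx | hx
      · exact Or.inr (List.take_subset _ _ hx)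
      · rcases List.mem_cons.mp hx with rfl | hx
        · exact Or.inl rfl
        · exact Or.inr (List.drop_subset _ _ hx)
    · rintro (rfl | hx)
      · exact List.mem_append.mpr (Or.inr List.mem_cons_self)
      · rcases List.mem_append.mp ((List.take_append_drop p g) ▸ hx) with h | h
        · exact List.mem_append.mpr (Or.inl h)
        · exact List.mem_append.mpr (Or.inr (List.mem_cons_of_mem _ h))
  constructor
  · rw [mem_WSet]
    refine ⟨⟨?_, ?_, ?_⟩, ?_⟩
    · simp only [List.length_append, List.length_take, List.length_cons, List.length_drop]
      omega
    · intro x hx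
      rcases (hmem x).mp hx with rfl | hx
      · exact ⟨by omega, by omega⟩
      · exact ⟨(hb x hx).1, by have := (hb x hx).2; omega⟩
    · rw [List.map_append, List.map_cons, List.nodup_middle, List.nodup_cons,
        ← List.map_append, List.take_append_drop]
      refine ⟨?_, hn⟩
      intro hc
      obtain ⟨x, hx, hxa⟩ := List.mem_map.mp hc
      exact hgle x hx (by rw [hxa, hsabs])
    · exact (hmem 1).mpr (Or.inr h1g)
  · unfold rmv
    rw [List.filter_append, List.filter_cons]
    rw [if_neg (by simp [hsabs])]
    have ht : (g.take p).filter (fun x => decide (x.natAbs ≠ m + 1)) = g.take p :=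
      List.filter_eq_self.mpr fun a ha => by simp [hgle a (List.take_subset _ _ ha)]
    have hd : (g.drop p).filter (fun x => decide (x.natAbs ≠ m + 1)) = g.drop p :=
      List.filter_eq_self.mpr fun a ha => by simp [hgle a (List.drop_subset _ _ ha)]
    rw [ht, hd, List.take_append_drop]

theorem getD_abs_le {m : ℕ} {g : List ℤ} (hg : WinP m g) (r : ℕ) : (g.getD r 0).natAbs ≤ m := by
  rcases lt_or_ge r g.length with h | h
  · exact (hg.2.1 _ (getD_mem h)).2
  · rw [getD_default h]; simp

theorem child_inj {m : ℕ} {g : List ℤ} (hg : WinP m g) {p p' : ℕ} (hp : p ≤ m) (hp' : p' ≤ m)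
    {s s' : ℤ} (hs : s.natAbs = m + 1) (hs' : s'.natAbs = m + 1)
    (h : g.take p ++ s :: g.drop p = g.take p' ++ s' :: g.drop p') : p = p' ∧ s = s' := by
  have hL : g.length = m := hg.1
  have hpp : p = p' := by
    by_contra hne
    have heq := congrArg (fun l => (l.getD p' 0).natAbs) h
    rw [child_getD g p (by omega) s p', child_getD g p' (by omega) s' p'] at heq
    rw [if_neg (lt_irrefl p'), if_pos rfl] at heq
    rcases lt_trichotomy p' p with h2 | h2 | h2
    · rw [if_pos h2] at heq
      have := getD_abs_le hg p'
      omega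
    · exact hne h2.symm
    · rw [if_neg (by omega), if_neg (by omega)] at heq
      have := getD_abs_le hg (p' - 1)
      omega
  subst hpp
  refine ⟨rfl, ?_⟩
  have heq := congrArg (fun l => l.getD p 0) h
  rw [child_getD g p (by omega) s p, child_getD g p (by omega) s' p] at heq
  rw [if_neg (lt_irrefl p), if_pos rfl, if_neg (lt_irrefl p), if_pos rfl] at heq
  exact heq

theorem child_decomp {m : ℕ} (hm : 1 ≤ m) {c : List ℤ} (hc : c ∈ WSet (m + 1)) :
    ∃ g p s, g ∈ WSet m ∧ p ≤ m ∧ (s = ((m : ℤ) + 1) ∨ s = -((m : ℤ) + 1)) ∧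
      c = g.take p ++ s :: g.drop p ∧ rmv m c = g := by
  obtain ⟨hw, h1c⟩ := mem_WSet.mp hc
  obtain ⟨p, hp, hv, _⟩ := exists_unique_abs hw (by omega) (le_refl (m + 1))
  have hlen := hw.1
  have hb := hw.2.1
  have hn := hw.2.2
  set s := c.getD p 0 with hsdef
  set t := c.take p with htdef
  set d := c.drop (p + 1) with hddef
  have hplen : p < c.length := by omega
  have hc_eq : c = t ++ s :: d := by
    conv_lhs => rw [← List.take_append_drop p c]
    rw [List.drop_eq_getElem_cons hplen, htdef, hddef]
    congr 2
    rw [hsdef, List.getD_eq_getElem?_getD, List.getElem?_eq_getElem hplen]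
    rfl
  have htl : t.length = p := by rw [htdef]; simp [List.length_take]; omega
  have hdl : d.length = m - p := by rw [hddef]; simp [List.length_drop]; omega
  have hmapc : c.map Int.natAbs = (t.map Int.natAbs) ++ (s.natAbs :: d.map Int.natAbs) := by
    conv_lhs => rw [hc_eq]
    simp
  have hmid := List.nodup_middle.mp (hmapc ▸ hn)
  rw [List.nodup_cons, ← List.map_append] at hmid
  have habs_g : ∀ x ∈ t ++ d, x.natAbs ≠ m + 1 := by
    intro x hx hxa
    exact hmid.1 (List.mem_map.mpr ⟨x, hx, by rw [hxa, hv]⟩)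
  have hsub : ∀ x ∈ t ++ d, x ∈ c := by
    intro x hx
    rcases List.mem_append.mp hx with hx | hx
    · exact List.take_subset _ _ hx
    · exact List.drop_subset _ _ hx
  have hg_mem : (t ++ d) ∈ WSet m := by
    rw [mem_WSet]
    refine ⟨⟨?_, ?_, hmid.2⟩, ?_⟩
    · rw [List.length_append, htl, hdl]; omega
    · intro x hx
      refine ⟨(hb x (hsub x hx)).1, ?_⟩
      have := (hb x (hsub x hx)).2
      have := habs_g x hx
      omega
    · have h1c' := hc_eq ▸ h1c
      rcases List.mem_append.mp h1c' with h | h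
      · exact List.mem_append.mpr (Or.inl h)
      · rcases List.mem_cons.mp h with h1s | h
        · exfalso; rw [← h1s] at hv; simp at hv; omega
        · exact List.mem_append.mpr (Or.inr h)
  have hrm : rmv m c = t ++ d := by
    conv_lhs => rw [hc_eq]
    unfold rmv
    rw [List.filter_append, List.filter_cons, if_neg (by simp [hv])]
    have ht2 : t.filter (fun x => decide (x.natAbs ≠ m + 1)) = t :=
      List.filter_eq_self.mpr fun a ha => by
        simp [habs_g a (List.mem_append.mpr (Or.inl ha))]
    have hd2 : d.filter (fun x => decide (x.natAbs ≠ m + 1)) = d :=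
      List.filter_eq_self.mpr fun a ha => by
        simp [habs_g a (List.mem_append.mpr (Or.inr ha))]
    rw [ht2, hd2]
  refine ⟨t ++ d, p, s, hg_mem, by omega, by omega, ?_, hrm⟩
  rw [List.take_left' htl, List.drop_left' htl]
  exact hc_eq

noncomputable def cardW (m k : ℕ) : ℕ := ((WSet m).filter fun l => bw l = k).card

theorem cardW_rec {m : ℕ} (hm : 1 ≤ m) (k : ℕ) :
    cardW (m + 1) k = ∑ g ∈ WSet m, ((if bw g = k then 2 * k + 1 else 0)
      + (if bw g + 1 = k then 2 * (m + 1) - (2 * bw g + 1) else 0)) := by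
  unfold cardW
  rw [Finset.card_eq_sum_card_fiberwise (f := fun c => rmv m c) (t := WSet m) ?hmap]
  case hmap =>
    intro c hc
    obtain ⟨g, p, s, hg, _, _, _, hr⟩ := child_decomp hm (Finset.mem_filter.mp hc).1
    simpa [hr] using hg
  apply Finset.sum_congr rfl
  intro g hg
  rw [← parent_count hm (mem_WSet.mp hg).1 k]
  set T := ((Finset.range (m + 1)) ×ˢ ({((m : ℤ) + 1), -((m : ℤ) + 1)} : Finset ℤ)).filter
      (fun q => bw (g.take q.1 ++ q.2 :: g.drop q.1) = k) with hT
  have hcard : ((((WSet (m + 1)).filter fun l => bw l = k)).filter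
      fun c => rmv m c = g).card = T.card := by
    symm
    apply Finset.card_bij (fun q _ => g.take q.1 ++ q.2 :: g.drop q.1)
    · rintro ⟨p, s⟩ hq
      simp only [hT, Finset.mem_filter, Finset.mem_product, Finset.mem_range,
        Finset.mem_insert, Finset.mem_singleton] at hq
      obtain ⟨⟨hp, hs⟩, hbw⟩ := hq
      have h2 := child_mem hm hg (by omega : p ≤ m) hs
      rw [Finset.mem_filter, Finset.mem_filter]
      exact ⟨⟨h2.1, hbw⟩, h2.2⟩
    · rintro ⟨p, s⟩ hq ⟨p', s'⟩ hq' heq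
      simp only [hT, Finset.mem_filter, Finset.mem_product, Finset.mem_range,
        Finset.mem_insert, Finset.mem_singleton] at hq hq'
      obtain ⟨⟨hp, hs⟩, _⟩ := hq
      obtain ⟨⟨hp', hs'⟩, _⟩ := hq'
      have habs : s.natAbs = m + 1 := by rcases hs with rfl | rfl <;> omega
      have habs' : s'.natAbs = m + 1 := by rcases hs' with rfl | rfl <;> omega
      have h3 := child_inj (mem_WSet.mp hg).1 (by omega : p ≤ m) (by omega : p' ≤ m)
        habs habs' heq
      exact Prod.ext h3.1 h3.2
    · intro c hc
      rw [Finset.mem_filter, Finset.mem_filter] at hc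
      obtain ⟨⟨hcW, hcbw⟩, hcr⟩ := hc
      obtain ⟨g', p, s, hg', hp, hs, hceq, hr⟩ := child_decomp hm hcW
      have hgg : g' = g := by rw [← hr, hcr]
      subst hgg
      refine ⟨(p, s), ?_, hceq.symm⟩
      simp only [hT, Finset.mem_filter, Finset.mem_product, Finset.mem_range,
        Finset.mem_insert, Finset.mem_singleton]
      exact ⟨⟨by omega, hs⟩, by rw [← hceq]; exact hcbw⟩
  rw [hcard, hT, Finset.card_filter, Finset.sum_product]
  apply Finset.sum_congr rfl
  intro p _
  rw [Finset.sum_pair (by omega : ((m : ℤ) + 1) ≠ -((m : ℤ) + 1))]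

theorem cardW_succ_zero {m : ℕ} (hm : 1 ≤ m) : cardW (m + 1) 0 = cardW m 0 := by
  rw [cardW_rec hm 0]
  have h : ∀ g ∈ WSet m, ((if bw g = 0 then 2 * 0 + 1 else 0)
      + (if bw g + 1 = 0 then 2 * (m + 1) - (2 * bw g + 1) else 0))
      = if bw g = 0 then 1 else 0 := fun g _ => by
    rw [if_neg (by omega : ¬ (bw g + 1 = 0)), add_zero]
  rw [Finset.sum_congr rfl h, ← Finset.card_filter]
  rfl

theorem cardW_succ_pos {m : ℕ} (hm : 1 ≤ m) (k : ℕ) :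
    cardW (m + 1) (k + 1)
      = (2 * (k + 1) + 1) * cardW m (k + 1) + (2 * (m + 1) - (2 * k + 1)) * cardW m k := by
  rw [cardW_rec hm (k + 1), Finset.sum_add_distrib]
  congr 1
  · rw [← Finset.sum_filter, Finset.sum_const, smul_eq_mul, mul_comm]
    rfl
  · have h : ∀ g ∈ WSet m, (if bw g + 1 = k + 1 then 2 * (m + 1) - (2 * bw g + 1) else 0)
        = (if bw g = k then 2 * (m + 1) - (2 * k + 1) else 0) := fun g _ => by
      have hc : (bw g + 1 = k + 1) ↔ (bw g = k) := by omega
      rw [if_congr hc rfl rfl]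
      split_ifs with h2
      · rw [h2]
      · rfl
    rw [Finset.sum_congr rfl h, ← Finset.sum_filter, Finset.sum_const, smul_eq_mul, mul_comm]
    rfl

theorem cardW_eq_zero {m k : ℕ} (hm : 1 ≤ m) (h : m < k) : cardW m k = 0 := by
  unfold cardW
  rw [Finset.card_eq_zero, Finset.filter_eq_empty_iff]
  intro l hl
  have := bw_le_of_winP hm (mem_WSet.mp hl).1
  omega

theorem WSet_one : WSet 1 = {[1]} := by
  ext l
  rw [mem_WSet, Finset.mem_singleton]
  constructor
  · rintro ⟨⟨hlen, hb, _⟩, h1⟩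
    rcases List.length_eq_one_iff.mp hlen with ⟨x, rfl⟩
    rcases List.mem_singleton.mp h1 with rfl
    rfl
  · rintro rfl
    refine ⟨⟨rfl, ?_, by simp⟩, by simp⟩
    intro x hx
    rcases List.mem_singleton.mp hx with rfl
    exact ⟨by omega, by simp⟩

theorem bw_one : bw [(1 : ℤ)] = 0 := by decide

theorem cardW_one (k : ℕ) : cardW 1 k = if k = 0 then 1 else 0 := by
  unfold cardW
  rw [WSet_one, Finset.filter_singleton, bw_one]
  split_ifs with h1 h2 h2
  · simp
  · omega
  · omega
  · simp

section Bridge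

variable {n : ℕ} {w : Equiv.Perm ℤ}

theorem sp_fix (h : IsSignedPerm n w) {i : ℤ} (hi : (n : ℕ) < i.natAbs) : w i = i :=
  h.2 i (by rw [Int.abs_eq_natAbs]; exact_mod_cast hi)

theorem sp_zero (h : IsSignedPerm n w) : w 0 = 0 := by
  have h0 := h.1 0
  rw [neg_zero] at h0
  omega

theorem sp_ne_zero (h : IsSignedPerm n w) {i : ℤ} (hi : i ≠ 0) : w i ≠ 0 := by
  intro hc
  exact hi (w.injective (by rw [hc, sp_zero h]))

theorem sp_abs_le (h : IsSignedPerm n w) {i : ℤ} (hi2 : i.natAbs ≤ n) :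
    (w i).natAbs ≤ n := by
  by_contra hc
  have h2 : w (w i) = w i := sp_fix h (by omega)
  have h3 : w i = i := w.injective h2
  omega

def win (n : ℕ) (w : Equiv.Perm ℤ) : List ℤ := (List.range n).map (fun p : ℕ => w ((p : ℤ) + 1))

theorem win_length : (win n w).length = n := by simp [win]

theorem win_getD {p : ℕ} (hp : p < n) : (win n w).getD p 0 = w ((p : ℤ) + 1) := by
  rw [List.getD_eq_getElem?_getD, win, List.getElem?_map, List.getElem?_range hp]
  rfl

theorem win_winP (h : IsSignedPerm n w) : WinP n (win n w) := by
  refine ⟨win_length, ?_, ?_⟩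
  · intro x hx
    obtain ⟨i, hi, rfl⟩ := List.mem_map.mp hx
    rw [List.mem_range] at hi
    refine ⟨sp_ne_zero h (by omega), sp_abs_le h (by omega : ((i : ℤ) + 1).natAbs ≤ n)⟩
  · rw [win, List.map_map]
    apply List.Nodup.map_on _ List.nodup_range
    intro p hp q hq heq
    rw [List.mem_range] at hp hq
    simp only [Function.comp_apply] at heq
    have : w ((p : ℤ) + 1) = w ((q : ℤ) + 1) ∨ w ((p : ℤ) + 1) = - w ((q : ℤ) + 1) := by omega
    rcases this with h2 | h2
    · have := w.injective h2
      omega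
    · rw [← h.1 ((q : ℤ) + 1)] at h2
      have := w.injective h2
      omega

theorem one_mem_win (hn : 1 ≤ n) (h : IsSignedPerm n w) :
    (1 : ℤ) ∈ win n w ↔ 0 < w.symm 1 := by
  constructor
  · intro hmem
    obtain ⟨i, hi, hwi⟩ := List.mem_map.mp hmem
    rw [List.mem_range] at hi
    have h2 : w.symm 1 = (i : ℤ) + 1 := by
      apply w.injective
      rw [Equiv.apply_symm_apply, hwi]
    omega
  · intro hpos
    set a := w.symm 1 with ha
    have hwa : w a = 1 := Equiv.apply_symm_apply w 1
    have han : a ≤ (n : ℤ) := by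
      by_contra hc
      have hfix : w a = a := sp_fix h (by omega)
      omega
    rw [win]
    apply List.mem_map.mpr
    refine ⟨(a - 1).toNat, List.mem_range.mpr (by omega), ?_⟩
    rw [show (((a - 1).toNat : ℤ) + 1) = a by omega]
    exact hwa

theorem extL_win (hn : 1 ≤ n) {q : ℕ} (hq : q ≤ n + 1) :
    extL (win n w) q = if q = 0 ∨ q = n + 1 then 0 else w (q : ℤ) := by
  rcases Nat.eq_zero_or_pos q with rfl | hq0
  · rw [extL_zero, if_pos (Or.inl rfl)]
  · obtain ⟨r, rfl⟩ : ∃ r, q = r + 1 := ⟨q - 1, by omega⟩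
    rw [extL_succ]
    rcases lt_or_ge r n with hr | hr
    · rw [win_getD hr, if_neg (by omega)]
      norm_cast
    · have hrn : r = n := by omega
      subst hrn
      rw [getD_default (by rw [win_length]), if_pos (Or.inr rfl)]

theorem basc_eq_bw (hn : 1 ≤ n) (h : IsSignedPerm n w) : basc n w = bw (win n w) := by
  have hbw : bw (win n w) = ((Finset.range (n + 1)).filter
      (fun q => lll (extL (win n w) q) (extL (win n w) (q + 1)))).card := by
    rw [bw, win_length, Finset.card_filter]
  rw [hbw, basc]
  refine Finset.card_bij' (fun a _ => if a = -1 then 0 else a.toNat)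
    (fun q _ => if q = 0 then -1 else (q : ℤ)) ?_ ?_ ?_ ?_
  · intro a ha
    rw [Finset.mem_filter, Finset.mem_insert, Finset.mem_Icc] at ha
    obtain ⟨hmem, hP⟩ := ha
    rw [Finset.mem_filter, Finset.mem_range]
    rcases hmem with rfl | ⟨ha1, han⟩
    · rw [if_pos rfl]
      rw [if_pos rfl] at hP
      refine ⟨by omega, ?_⟩
      rw [extL_zero, extL_win hn (by omega : 0 + 1 ≤ n + 1),
        if_neg (show ¬ (0 + 1 = 0 ∨ 0 + 1 = n + 1) by omega),
        show ((0 + 1 : ℕ) : ℤ) = 1 by norm_num]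
      unfold lll
      omega
    · have hne1 : a ≠ -1 := by omega
      rw [if_neg hne1]
      rw [if_neg hne1] at hP
      refine ⟨by omega, ?_⟩
      rw [extL_win hn (by omega : a.toNat ≤ n + 1), extL_win hn (by omega : a.toNat + 1 ≤ n + 1),
        if_neg (show ¬ (a.toNat = 0 ∨ a.toNat = n + 1) by omega),
        show ((a.toNat : ℤ)) = a by omega]
      by_cases hne : a = (n : ℤ)
      · rw [if_pos (show a.toNat + 1 = 0 ∨ a.toNat + 1 = n + 1 by omega)]
        rw [if_pos hne] at hP
        rw [hne]
        unfold lll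
        omega
      · rw [if_neg (show ¬ (a.toNat + 1 = 0 ∨ a.toNat + 1 = n + 1) by omega)]
        rw [if_neg hne] at hP
        rw [show ((a.toNat + 1 : ℕ) : ℤ) = a + 1 by omega]
        exact Lll_iff.mp hP
  · intro q hq
    rw [Finset.mem_filter, Finset.mem_range] at hq
    obtain ⟨hqn, hQ⟩ := hq
    rw [Finset.mem_filter, Finset.mem_insert, Finset.mem_Icc]
    rcases Nat.eq_zero_or_pos q with rfl | hq0
    · rw [if_pos rfl]
      refine ⟨Or.inl rfl, ?_⟩
      rw [if_pos rfl]
      rw [extL_zero, extL_win hn (by omega : 0 + 1 ≤ n + 1),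
        if_neg (show ¬ (0 + 1 = 0 ∨ 0 + 1 = n + 1) by omega),
        show ((0 + 1 : ℕ) : ℤ) = 1 by norm_num] at hQ
      unfold lll at hQ
      omega
    · rw [if_neg (by omega)]
      refine ⟨Or.inr ⟨by omega, by omega⟩, ?_⟩
      rw [if_neg (show ¬ ((q : ℤ)) = -1 by omega)]
      rw [extL_win hn (by omega : q ≤ n + 1), extL_win hn (by omega : q + 1 ≤ n + 1),
        if_neg (show ¬ (q = 0 ∨ q = n + 1) by omega)] at hQ
      by_cases hne : q = n
      · rw [if_pos (show ((q : ℤ)) = (n : ℤ) by exact_mod_cast hne)]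
        rw [if_pos (show q + 1 = 0 ∨ q + 1 = n + 1 by omega)] at hQ
        have hcast : ((q : ℤ)) = (n : ℤ) := by exact_mod_cast hne
        rw [hcast] at hQ
        unfold lll at hQ
        omega
      · rw [if_neg (show ¬ ((q : ℤ)) = (n : ℤ) by exact_mod_cast hne)]
        rw [if_neg (show ¬ (q + 1 = 0 ∨ q + 1 = n + 1) by omega),
          show ((q + 1 : ℕ) : ℤ) = (q : ℤ) + 1 by push_cast; ring] at hQ
        exact Lll_iff.mpr hQ
  · intro a ha
    rw [Finset.mem_filter, Finset.mem_insert, Finset.mem_Icc] at ha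
    rcases ha.1 with rfl | ⟨ha1, han⟩
    · rw [if_pos rfl, if_pos rfl]
    · split_ifs <;> omega
  · intro q hq
    rw [Finset.mem_filter, Finset.mem_range] at hq
    rcases Nat.eq_zero_or_pos q with rfl | hq0
    · rw [if_pos rfl, if_pos rfl]
    · rw [if_neg (by omega), if_neg (show ¬ q = 0 by omega)]
      omega

def fperm (n : ℕ) (l : List ℤ) : ℤ → ℤ := fun i =>
  if 1 ≤ i ∧ i ≤ (n : ℤ) then l.getD (i.toNat - 1) 0
  else if 1 ≤ -i ∧ -i ≤ (n : ℤ) then -(l.getD ((-i).toNat - 1) 0)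
  else i

section Perm

variable {n : ℕ} {l : List ℤ}

theorem fperm_pos (hl : WinP n l) {i : ℤ} (h1 : 1 ≤ i) (h2 : i ≤ (n : ℤ)) :
    fperm n l i = l.getD (i.toNat - 1) 0 := if_pos ⟨h1, h2⟩

theorem fperm_neg' (hl : WinP n l) {i : ℤ} (h1 : 1 ≤ -i) (h2 : -i ≤ (n : ℤ)) :
    fperm n l i = -(l.getD ((-i).toNat - 1) 0) := by
  rw [fperm, if_neg (by omega), if_pos ⟨h1, h2⟩]

theorem fperm_out (hl : WinP n l) {i : ℤ} (h : ¬ ((1 ≤ i ∧ i ≤ (n : ℤ)) ∨ (1 ≤ -i ∧ -i ≤ (n : ℤ)))) :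
    fperm n l i = i := by
  rw [fperm, if_neg (by omega), if_neg (by omega)]

theorem fperm_val (hl : WinP n l) {i : ℤ}
    (h : (1 ≤ i ∧ i ≤ (n : ℤ)) ∨ (1 ≤ -i ∧ -i ≤ (n : ℤ))) :
    fperm n l i ≠ 0 ∧ (fperm n l i).natAbs ≤ n
      ∧ (fperm n l i).natAbs = (l.getD (i.natAbs - 1) 0).natAbs := by
  have hL : l.length = n := hl.1
  rcases h with ⟨h1, h2⟩ | ⟨h1, h2⟩
  · rw [fperm_pos hl h1 h2]
    have hidx : i.toNat - 1 < l.length := by omega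
    have hval := hl.2.1 _ (getD_mem hidx)
    have hieq : i.toNat - 1 = i.natAbs - 1 := by omega
    exact ⟨hval.1, hval.2, by rw [hieq]⟩
  · rw [fperm_neg' hl h1 h2]
    have hidx : (-i).toNat - 1 < l.length := by omega
    have hval := hl.2.1 _ (getD_mem hidx)
    have hieq : (-i).toNat - 1 = i.natAbs - 1 := by omega
    refine ⟨by omega, by omega, ?_⟩
    rw [hieq]
    omega

theorem fperm_negneg (hl : WinP n l) (i : ℤ) : fperm n l (-i) = - fperm n l i := by
  by_cases h1 : 1 ≤ i ∧ i ≤ (n : ℤ)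
  · rw [fperm_pos hl h1.1 h1.2, fperm_neg' hl (by omega) (by omega), neg_neg]
  · by_cases h2 : 1 ≤ -i ∧ -i ≤ (n : ℤ)
    · rw [fperm_neg' hl h2.1 h2.2, fperm_pos hl h2.1 h2.2, neg_neg]
    · rw [fperm_out hl (by omega), fperm_out hl (by omega)]

theorem fperm_bij (hn : 1 ≤ n) (hl : WinP n l) : Function.Bijective (fperm n l) := by
  have hL : l.length = n := hl.1
  constructor
  · intro a b hab
    by_cases ha : (1 ≤ a ∧ a ≤ (n : ℤ)) ∨ (1 ≤ -a ∧ -a ≤ (n : ℤ))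
    · by_cases hb : (1 ≤ b ∧ b ≤ (n : ℤ)) ∨ (1 ≤ -b ∧ -b ≤ (n : ℤ))
      · have hva := fperm_val hl ha
        have hvb := fperm_val hl hb
        have hnat : (l.getD (a.natAbs - 1) 0).natAbs = (l.getD (b.natAbs - 1) 0).natAbs := by
          rw [← hva.2.2, ← hvb.2.2, hab]
        have hidx := getD_natAbs_inj hl (show a.natAbs - 1 < n by omega)
          (show b.natAbs - 1 < n by omega) hnat
        have habs : a.natAbs = b.natAbs := by omega
        rcases (show a = b ∨ a = -b by omega) with h | h
        · exact h
        · exfalso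
          rw [h, fperm_negneg hl b] at hab
          have := fperm_val hl hb
          omega
      · rw [fperm_out hl hb] at hab
        have := fperm_val hl ha
        rw [hab] at this
        omega
    · rw [fperm_out hl ha] at hab
      by_cases hb : (1 ≤ b ∧ b ≤ (n : ℤ)) ∨ (1 ≤ -b ∧ -b ≤ (n : ℤ))
      · have := fperm_val hl hb
        rw [← hab] at this
        omega
      · rw [fperm_out hl hb] at hab
        exact hab
  · intro j
    by_cases hj : (1 ≤ j ∧ j ≤ (n : ℤ)) ∨ (1 ≤ -j ∧ -j ≤ (n : ℤ))
    · obtain ⟨p, hp, hv, _⟩ := exists_unique_abs hl (show 1 ≤ j.natAbs by omega)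
        (show j.natAbs ≤ n by omega)
      rcases (show l.getD p 0 = j ∨ l.getD p 0 = -j by omega) with h | h
      · refine ⟨(p : ℤ) + 1, ?_⟩
        rw [fperm_pos hl (by omega) (by omega), show ((p : ℤ) + 1).toNat - 1 = p by omega]
        exact h
      · refine ⟨-((p : ℤ) + 1), ?_⟩
        rw [fperm_negneg hl, fperm_pos hl (by omega) (by omega),
          show ((p : ℤ) + 1).toNat - 1 = p by omega, h, neg_neg]
    · exact ⟨j, fperm_out hl hj⟩

theorem exists_perm (hn : 1 ≤ n) (hl : WinP n l) :
    ∃ w : Equiv.Perm ℤ, IsSignedPerm n w ∧ win n w = l := by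
  set w : Equiv.Perm ℤ := Equiv.ofBijective _ (fperm_bij hn hl) with hw
  have happ : ∀ i, w i = fperm n l i := fun i => rfl
  refine ⟨w, ⟨fun i => by rw [happ, happ]; exact fperm_negneg hl i,
    fun i hi => by
      rw [happ]
      apply fperm_out hl
      rw [Int.abs_eq_natAbs] at hi
      omega⟩, ?_⟩
  apply List.ext_getElem (by rw [win_length, hl.1])
  intro p h1 h2
  have hp : p < n := by rwa [win_length] at h1
  have e1 : (win n w)[p] = (win n w).getD p 0 := by
    rw [List.getD_eq_getElem?_getD, List.getElem?_eq_getElem h1]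
    rfl
  have e2 : l[p] = l.getD p 0 := by
    rw [List.getD_eq_getElem?_getD, List.getElem?_eq_getElem h2]
    rfl
  rw [e1, e2, win_getD hp, happ, fperm_pos hl (by omega) (by omega),
    show ((p : ℤ) + 1).toNat - 1 = p by omega]

end Perm

end Bridge

theorem win_inj {n : ℕ} {w w' : Equiv.Perm ℤ} (hw : IsSignedPerm n w) (hw' : IsSignedPerm n w')
    (h : win n w = win n w') : w = w' := by
  have hpos : ∀ j : ℤ, 1 ≤ j → j ≤ (n : ℤ) → w j = w' j := by
    intro j hj1 hj2
    have hp : j.toNat - 1 < n := by omega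
    have hcast : ((j.toNat - 1 : ℕ) : ℤ) + 1 = j := by omega
    have e1 := win_getD (n := n) (w := w) hp
    have e2 := win_getD (n := n) (w := w') hp
    rw [h] at e1
    rw [hcast] at e1 e2
    exact e1.symm.trans e2
  apply Equiv.ext
  intro i
  by_cases h1 : 1 ≤ i ∧ i ≤ (n : ℤ)
  · exact hpos i h1.1 h1.2
  · by_cases h2 : 1 ≤ -i ∧ -i ≤ (n : ℤ)
    · have hb := hw'.1 (-i)
      have hc := hw.1 (-i)
      rw [neg_neg] at hb hc
      rw [hb, hc, hpos (-i) h2.1 h2.2]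
    · rcases eq_or_ne i 0 with rfl | hne
      · rw [sp_zero hw, sp_zero hw']
      · have hgt : (n : ℤ) < |i| := by rw [Int.abs_eq_natAbs]; omega
        rw [hw.2 i hgt, hw'.2 i hgt]

theorem psiZ_neg (n : ℕ) {k : ℤ} (hk : k < 0) : psiZ n k = 0 := by
  rw [psiZ]
  have hemp : {w : Equiv.Perm ℤ | InXn n w ∧ (basc n w : ℤ) = k} = ∅ := by
    ext w
    simp only [Set.mem_setOf_eq, Set.mem_empty_iff_false, iff_false, not_and]
    intro _ hb
    omega
  rw [hemp, Set.ncard_empty]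

theorem psiZ_eq_cardW {n : ℕ} (hn : 1 ≤ n) (k : ℕ) : psiZ n (k : ℤ) = cardW n k := by
  have hset : {w : Equiv.Perm ℤ | InXn n w ∧ (basc n w : ℤ) = (k : ℤ)}
      = {w : Equiv.Perm ℤ | InXn n w ∧ basc n w = k} := by
    ext w
    simp [Nat.cast_inj]
  rw [psiZ, hset]
  have hinj : Set.InjOn (win n) {w : Equiv.Perm ℤ | InXn n w ∧ basc n w = k} :=
    fun a ha b hb hab => win_inj ha.1.1 hb.1.1 hab
  have himg : (win n) '' {w : Equiv.Perm ℤ | InXn n w ∧ basc n w = k}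
      = ↑((WSet n).filter fun l => bw l = k) := by
    ext l
    simp only [Set.mem_image, Set.mem_setOf_eq, Finset.coe_filter, Set.mem_setOf_eq]
    constructor
    · rintro ⟨w, ⟨⟨hsp, hpos⟩, hb⟩, rfl⟩
      refine ⟨mem_WSet.mpr ⟨win_winP hsp, (one_mem_win hn hsp).mpr hpos⟩, ?_⟩
      rw [← basc_eq_bw hn hsp, hb]
    · rintro ⟨hmem, hbw⟩
      obtain ⟨hwp, h1l⟩ := mem_WSet.mp hmem
      obtain ⟨w, hsp, hwin⟩ := exists_perm hn hwp
      refine ⟨w, ⟨⟨hsp, ?_⟩, ?_⟩, hwin⟩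
      · exact (one_mem_win hn hsp).mp (by rw [hwin]; exact h1l)
      · rw [basc_eq_bw hn hsp, hwin]
        exact hbw
  rw [← Set.ncard_image_of_injOn hinj, himg, Set.ncard_coe_finset]
  rfl

theorem psi_main :
    (∀ n : ℕ, 2 ≤ n → ∀ k : ℤ,
      (psiZ n k : ℤ) = (2 * (n : ℤ) - 2 * k + 1) * (psiZ (n - 1) (k - 1) : ℤ)
        + (2 * k + 1) * (psiZ (n - 1) k : ℤ)) ∧
    psiZ 1 0 = 1 ∧ ∀ k : ℤ, k ≠ 0 → psiZ 1 k = 0 := by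
  refine ⟨?_, ?_, ?_⟩
  · intro n hn k
    obtain ⟨m, rfl⟩ : ∃ m, n = m + 1 := ⟨n - 1, by omega⟩
    have hm : 1 ≤ m := by omega
    rw [show m + 1 - 1 = m from rfl]
    rcases lt_trichotomy k 0 with hk | rfl | hk
    · rw [psiZ_neg _ hk, psiZ_neg _ hk, psiZ_neg _ (show k - 1 < 0 by omega)]
      ring
    · rw [psiZ_neg m (show (0 : ℤ) - 1 < 0 by norm_num)]
      rw [show ((0 : ℤ)) = ((0 : ℕ) : ℤ) from rfl,
        psiZ_eq_cardW (show 1 ≤ m + 1 by omega) 0, psiZ_eq_cardW hm 0, cardW_succ_zero hm]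
      push_cast
      ring
    · obtain ⟨j, rfl⟩ : ∃ j : ℕ, k = (j : ℤ) + 1 := ⟨(k - 1).toNat, by omega⟩
      rw [show ((j : ℤ) + 1) = ((j + 1 : ℕ) : ℤ) by push_cast; ring,
        show (((j + 1 : ℕ) : ℤ) - 1) = ((j : ℕ) : ℤ) by push_cast; ring,
        psiZ_eq_cardW (show 1 ≤ m + 1 by omega) (j + 1), psiZ_eq_cardW hm (j + 1),
        psiZ_eq_cardW hm j, cardW_succ_pos hm j]
      by_cases hj : j ≤ m
      · rw [Nat.cast_add, Nat.cast_mul, Nat.cast_mul,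
          Nat.cast_sub (show 2 * j + 1 ≤ 2 * (m + 1) by omega)]
        push_cast
        ring
      · rw [cardW_eq_zero hm (show m < j by omega), cardW_eq_zero hm (show m < j + 1 by omega)]
        simp
  · rw [show ((0 : ℤ)) = ((0 : ℕ) : ℤ) from rfl, psiZ_eq_cardW le_rfl 0, cardW_one 0]
    simp
  · intro k hk
    rcases lt_or_ge k 0 with h | h
    · exact psiZ_neg _ h
    · obtain ⟨j, rfl⟩ : ∃ j : ℕ, k = (j : ℤ) := ⟨k.toNat, by omega⟩
      rw [psiZ_eq_cardW le_rfl j, cardW_one j, if_neg (by exact_mod_cast hk)]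

/-- Proposition: recurrence for `ψ_{n,k}`.
With the convention `ψ_{m,j} = 0` for `j < 0`, for all `n ≥ 2` and all `k`,
`ψ_{n,k} = (2n - 2k + 1) ψ_{n-1,k-1} + (2k + 1) ψ_{n-1,k}`, with initial conditions
`ψ_{1,0} = 1` and `ψ_{1,k} = 0` for `k ≠ 0`. -/
theorem psi_recurrence :
    (∀ n : ℕ, 2 ≤ n → ∀ k : ℤ,
      (psiZ n k : ℤ) = (2 * (n : ℤ) - 2 * k + 1) * (psiZ (n - 1) (k - 1) : ℤ)
        + (2 * k + 1) * (psiZ (n - 1) k : ℤ)) ∧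
    psiZ 1 0 = 1 ∧ ∀ k : ℤ, k ≠ 0 → psiZ 1 k = 0 := psi_main
end

section
/- For every n ≥ 2, the polynomial identity Ψ_{C_n}(t) = (1 + (2n−1)t)·Ψ_{C_{n−1}}(t) + 2t(1−t)·Ψ'_{C_{n−1}}(t) holds in ℤ[t], where Ψ' denotes the formal derivative with respect to t. -/
open scoped Classical

def wlen (m : ℕ) (f : ℕ → ℤ) : Prop :=
  f 0 = 0 ∧ (∀ i, m < i → f i = 0) ∧
  (∀ i, 1 ≤ i → i ≤ m → 1 ≤ |f i| ∧ |f i| ≤ (m : ℤ)) ∧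
  (∀ i j, 1 ≤ i → i ≤ m → 1 ≤ j → j ≤ m → |f i| = |f j| → i = j) ∧
  (∃ i, 1 ≤ i ∧ i ≤ m ∧ f i = 1)

noncomputable def Words (m : ℕ) : Finset (ℕ → ℤ) :=
  ((Fintype.piFinset fun _ : Fin m => Finset.Icc (-(m:ℤ)) m).image
    (fun g i => if h : 1 ≤ i ∧ i ≤ m then g ⟨i-1, by omega⟩ else 0)).filter (wlen m)

lemma abs_all {m : ℕ} {f : ℕ → ℤ} (hf : wlen m f) : ∀ i, |f i| ≤ (m : ℤ) := by
  intro i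
  rcases Nat.eq_zero_or_pos i with h | h
  · subst h; simp [hf.1]
  rcases le_or_gt i m with h2 | h2
  · exact (hf.2.2.1 i h h2).2
  · rw [hf.2.1 i h2]; simp

lemma mem_Words {m : ℕ} {f : ℕ → ℤ} : f ∈ Words m ↔ wlen m f := by
  constructor
  · intro h; exact (Finset.mem_filter.mp h).2
  · intro h
    refine Finset.mem_filter.mpr ⟨Finset.mem_image.mpr ⟨fun j : Fin m => f (j+1), ?_, ?_⟩, h⟩
    · rw [Fintype.mem_piFinset]
      intro j
      have h2 := abs_le.mp (abs_all h (j+1))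
      rw [Finset.mem_Icc]
      exact h2
    · funext i
      by_cases hi : 1 ≤ i ∧ i ≤ m
      · rw [dif_pos hi]
        show f ((i-1)+1) = f i
        congr 1
        omega
      · rw [dif_neg hi]
        rcases Nat.eq_zero_or_pos i with h0 | h0
        · subst h0; exact (h.1).symm
        · exact (h.2.1 i (by omega)).symm

noncomputable def bascW (m : ℕ) (f : ℕ → ℤ) : ℕ :=
  ((Finset.range (m+1)).filter fun i => Lll (f i) (f (i+1))).card

noncomputable def wordPsi (m k : ℕ) : ℕ :=
  ((Words m).filter fun f => bascW m f = k).card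

lemma lll_lt {a b : ℤ} (h : Lll a b) : a < b := by
  obtain ⟨c, _, h1, h2⟩ := h; omega

lemma lll_zero_right {a : ℤ} : Lll a 0 ↔ a ≤ -2 := by
  constructor
  · rintro ⟨c, h1, h2, h3⟩; omega
  · intro h; exact ⟨-1, by omega, by omega, by omega⟩

lemma lll_zero_left {b : ℤ} : Lll 0 b ↔ 2 ≤ b := by
  constructor
  · rintro ⟨c, h1, h2, h3⟩; omega
  · intro h; exact ⟨1, by omega, by omega, by omega⟩

lemma lll_big {m : ℕ} (hm : 1 ≤ m) {a : ℤ} (ha : |a| ≤ (m:ℤ)) :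
    Lll a ((m:ℤ)+1) ↔ a ≠ (m:ℤ) := by
  rw [abs_le] at ha
  constructor
  · rintro ⟨c, h1, h2, h3⟩; intro he; omega
  · intro h; exact ⟨(m:ℤ), by omega, by omega, by omega⟩

lemma lll_big' {m : ℕ} (hm : 1 ≤ m) {b : ℤ} (hb : |b| ≤ (m:ℤ)) :
    Lll (-((m:ℤ)+1)) b ↔ b ≠ -(m:ℤ) := by
  rw [abs_le] at hb
  constructor
  · rintro ⟨c, h1, h2, h3⟩; intro he; omega
  · intro h; exact ⟨-(m:ℤ), by omega, by omega, by omega⟩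

lemma not_lll_left {m : ℕ} {b : ℤ} (hb : |b| ≤ (m:ℤ)) : ¬ Lll ((m:ℤ)+1) b := by
  rw [abs_le] at hb
  rintro ⟨c, h1, h2, h3⟩; omega

lemma not_lll_right {m : ℕ} {a : ℤ} (ha : |a| ≤ (m:ℤ)) : ¬ Lll a (-((m:ℤ)+1)) := by
  rw [abs_le] at ha
  rintro ⟨c, h1, h2, h3⟩; omega

lemma lll_ne {m : ℕ} {a b : ℤ} (ha : |a| ≤ (m:ℤ)) (hb : |b| ≤ (m:ℤ)) (h : Lll a b) :
    a ≠ (m:ℤ) ∧ b ≠ -(m:ℤ) := by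
  rw [abs_le] at ha hb
  obtain ⟨c, h1, h2, h3⟩ := h
  constructor <;> intro he <;> omega

lemma exists_unique_abs_s8 {m : ℕ} {f : ℕ → ℤ} (hf : wlen m f) {v : ℤ}
    (h1 : 1 ≤ v) (h2 : v ≤ (m:ℤ)) : ∃! q, 1 ≤ q ∧ q ≤ m ∧ |f q| = v := by
  have hinj : Set.InjOn (fun i => |f i|) (Finset.Icc 1 m) := by
    intro i hi j hj hij
    rw [Finset.coe_Icc, Set.mem_Icc] at hi hj
    exact hf.2.2.2.1 i j hi.1 hi.2 hj.1 hj.2 hij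
  have hsub : (Finset.Icc 1 m).image (fun i => |f i|) ⊆ Finset.Icc (1:ℤ) m := by
    intro v hv
    obtain ⟨i, hi, rfl⟩ := Finset.mem_image.mp hv
    rw [Finset.mem_Icc] at hi
    rw [Finset.mem_Icc]
    exact hf.2.2.1 i hi.1 hi.2
  have hcard : ((Finset.Icc 1 m).image (fun i => |f i|)).card = m := by
    rw [Finset.card_image_of_injOn hinj, Nat.card_Icc]; omega
  have heq : (Finset.Icc 1 m).image (fun i => |f i|) = Finset.Icc (1:ℤ) m := by
    apply Finset.eq_of_subset_of_card_le hsub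
    rw [hcard, Int.card_Icc]
    omega
  have hv : v ∈ (Finset.Icc 1 m).image (fun i => |f i|) := by
    rw [heq, Finset.mem_Icc]; exact ⟨h1, h2⟩
  obtain ⟨q, hq, hfq⟩ := Finset.mem_image.mp hv
  rw [Finset.mem_Icc] at hq
  refine ⟨q, ⟨hq.1, hq.2, hfq⟩, ?_⟩
  rintro r ⟨hr1, hr2, hr3⟩
  exact hf.2.2.2.1 r q hr1 hr2 hq.1 hq.2 (by rw [hr3, hfq])

def ins (p : ℕ) (x : ℤ) (f : ℕ → ℤ) : ℕ → ℤ :=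
  fun i => if i < p then f i else if i = p then x else f (i-1)

lemma ins_lt {p i : ℕ} {x : ℤ} {f : ℕ → ℤ} (h : i < p) : ins p x f i = f i :=
  if_pos h

lemma ins_self {p : ℕ} {x : ℤ} {f : ℕ → ℤ} : ins p x f p = x := by
  simp [ins]

lemma ins_gt {p i : ℕ} {x : ℤ} {f : ℕ → ℤ} (h : p < i) : ins p x f i = f (i-1) := by
  simp only [ins]
  rw [if_neg (by omega), if_neg (by omega)]

lemma wlen_ins {m : ℕ} {f : ℕ → ℤ} (hm : 1 ≤ m) (hf : wlen m f) {p : ℕ} {x : ℤ}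
    (hp1 : 1 ≤ p) (hp2 : p ≤ m + 1) (hx : |x| = (m:ℤ)+1) : wlen (m+1) (ins p x f) := by
  refine ⟨?_, ?_, ?_, ?_, ?_⟩
  · rw [ins_lt (by omega)]; exact hf.1
  · intro i hi
    rw [ins_gt (by omega)]
    exact hf.2.1 _ (by omega)
  · intro i hi1 hi2
    rcases lt_trichotomy i p with h | h | h
    · rw [ins_lt h]
      have := hf.2.2.1 i hi1 (by omega)
      push_cast
      constructor <;> omega
    · subst h; rw [ins_self, hx]; push_cast; constructor <;> omega
    · rw [ins_gt h]
      have := hf.2.2.1 (i-1) (by omega) (by omega)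
      push_cast
      constructor <;> omega
  · intro i j hi1 hi2 hj1 hj2 hij
    rcases lt_trichotomy i p with h1 | h1 | h1 <;> rcases lt_trichotomy j p with h2 | h2 | h2
    · rw [ins_lt h1, ins_lt h2] at hij
      exact hf.2.2.2.1 i j hi1 (by omega) hj1 (by omega) hij
    · subst h2
      rw [ins_lt h1, ins_self] at hij
      have := abs_all hf i
      omega
    · rw [ins_lt h1, ins_gt h2] at hij
      have := hf.2.2.2.1 i (j-1) hi1 (by omega) (by omega) (by omega) hij
      omega
    · subst h1
      rw [ins_self, ins_lt h2] at hij
      have := abs_all hf j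
      omega
    · omega
    · subst h1
      rw [ins_self, ins_gt h2] at hij
      have := abs_all hf (j-1)
      omega
    · rw [ins_gt h1, ins_lt h2] at hij
      have := hf.2.2.2.1 (i-1) j (by omega) (by omega) hj1 (by omega) hij
      omega
    · subst h2
      rw [ins_gt h1, ins_self] at hij
      have := abs_all hf (i-1)
      omega
    · rw [ins_gt h1, ins_gt h2] at hij
      have := hf.2.2.2.1 (i-1) (j-1) (by omega) (by omega) (by omega) (by omega) hij
      omega
  · obtain ⟨q, hq1, hq2, hq3⟩ := hf.2.2.2.2
    by_cases h : q < p
    · exact ⟨q, hq1, by omega, by rw [ins_lt h]; exact hq3⟩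
    · refine ⟨q+1, by omega, by omega, ?_⟩
      rw [ins_gt (by omega)]
      simpa using hq3

lemma bascW_eq_sum (m : ℕ) (f : ℕ → ℤ) :
    bascW m f = ∑ i ∈ Finset.range (m+1), (if Lll (f i) (f (i+1)) then 1 else 0) := by
  rw [bascW, Finset.card_filter]

lemma bascW_ins {m : ℕ} {f : ℕ → ℤ} (hf : wlen m f) {p : ℕ}
    (hp1 : 1 ≤ p) (hp2 : p ≤ m + 1) (x : ℤ) :
    bascW (m+1) (ins p x f) + (if Lll (f (p-1)) (f p) then 1 else 0)
      = bascW m f + ((if Lll (f (p-1)) x then 1 else 0) + (if Lll x (f p) then 1 else 0)) := by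
  set g := ins p x f with hg
  set A : ℕ → ℕ := fun i => if Lll (f i) (f (i+1)) then 1 else 0 with hA
  set N : ℕ → ℕ := fun i => if Lll (g i) (g (i+1)) then 1 else 0 with hN
  have split2 : ∀ (S : ℕ → ℕ), ∑ i ∈ Finset.range (m+2), S i
      = (∑ i ∈ Finset.Ico 0 (p-1), S i) + (S (p-1) + S p)
        + ∑ i ∈ Finset.Ico (p+1) (m+2), S i := by
    intro S
    rw [Finset.range_eq_Ico,
      ← Finset.sum_Ico_consecutive S (by omega : 0 ≤ p+1) (by omega : p+1 ≤ m+2),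
      ← Finset.sum_Ico_consecutive S (by omega : 0 ≤ p-1) (by omega : p-1 ≤ p+1)]
    congr 1
    congr 1
    rw [Finset.sum_Ico_eq_sum_range]
    have h2 : p + 1 - (p-1) = 2 := by omega
    rw [h2]
    rw [Finset.sum_range_succ, Finset.sum_range_succ, Finset.sum_range_zero]
    have : p - 1 + 1 = p := by omega
    rw [this, Nat.add_zero]
    omega
  have split1 : ∑ i ∈ Finset.range (m+1), A i
      = (∑ i ∈ Finset.Ico 0 (p-1), A i) + A (p-1)
        + ∑ i ∈ Finset.Ico p (m+1), A i := by
    rw [Finset.range_eq_Ico,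
      ← Finset.sum_Ico_consecutive A (by omega : 0 ≤ p) (by omega : p ≤ m+1),
      ← Finset.sum_Ico_consecutive A (by omega : 0 ≤ p-1) (by omega : p-1 ≤ p)]
    congr 1
    congr 1
    rw [Finset.sum_Ico_eq_sum_range]
    have h2 : p - (p-1) = 1 := by omega
    rw [h2, Finset.sum_range_one, Nat.add_zero]
  have hNA : ∀ i ∈ Finset.Ico 0 (p-1), N i = A i := by
    intro i hi
    rw [Finset.mem_Ico] at hi
    simp only [hN, hA, hg]
    rw [ins_lt (by omega), ins_lt (by omega)]
  have hNp1 : N (p-1) = if Lll (f (p-1)) x then 1 else 0 := by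
    simp only [hN, hg]
    have h1 : p - 1 + 1 = p := by omega
    rw [h1, ins_lt (by omega), ins_self]
  have hNp : N p = if Lll x (f p) then 1 else 0 := by
    simp only [hN, hg]
    rw [ins_self, ins_gt (by omega)]
    have h1 : p + 1 - 1 = p := by omega
    rw [h1]
  have hNshift : ∑ i ∈ Finset.Ico (p+1) (m+2), N i = ∑ i ∈ Finset.Ico p (m+1), A i := by
    rw [Finset.sum_Ico_eq_sum_range, Finset.sum_Ico_eq_sum_range]
    have h2 : m + 2 - (p+1) = m + 1 - p := by omega
    rw [h2]
    apply Finset.sum_congr rfl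
    intro j hj
    rw [Finset.mem_range] at hj
    simp only [hN, hA, hg]
    rw [ins_gt (by omega), ins_gt (by omega)]
    have e1 : p + 1 + j - 1 = p + j := by omega
    have e2 : p + 1 + j + 1 - 1 = p + j + 1 := by omega
    rw [e1, e2]
  have lhs : bascW (m+1) g = (∑ i ∈ Finset.Ico 0 (p-1), A i)
      + ((if Lll (f (p-1)) x then 1 else 0) + (if Lll x (f p) then 1 else 0))
      + ∑ i ∈ Finset.Ico p (m+1), A i := by
    rw [bascW_eq_sum]
    show ∑ i ∈ Finset.range (m+2), N i = _
    rw [split2 N, Finset.sum_congr rfl hNA, hNp1, hNp, hNshift]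
  have rhs : bascW m f = (∑ i ∈ Finset.Ico 0 (p-1), A i) + A (p-1)
      + ∑ i ∈ Finset.Ico p (m+1), A i := by
    rw [bascW_eq_sum]; exact split1
  rw [lhs, rhs]
  have : A (p-1) = if Lll (f (p-1)) (f p) then 1 else 0 := by
    simp only [hA]
    have h1 : p - 1 + 1 = p := by omega
    rw [h1]
  rw [this]
  ring

lemma bascW_ins_pos {m : ℕ} {f : ℕ → ℤ} (hm : 1 ≤ m) (hf : wlen m f) {p : ℕ}
    (hp1 : 1 ≤ p) (hp2 : p ≤ m + 1) :
    bascW (m+1) (ins p ((m:ℤ)+1) f)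
      = if Lll (f (p-1)) (f p) ∨ f (p-1) = (m:ℤ) then bascW m f else bascW m f + 1 := by
  have h1 := bascW_ins hf hp1 hp2 ((m:ℤ)+1)
  have ha := abs_all hf (p-1)
  have hb := abs_all hf p
  rw [if_neg (not_lll_left hb)] at h1
  by_cases hc : Lll (f (p-1)) (f p)
  · have hne := (lll_ne ha hb hc).1
    rw [if_pos (Or.inl hc)]
    rw [if_pos hc, if_pos ((lll_big hm ha).mpr hne)] at h1
    omega
  · by_cases hd : f (p-1) = (m:ℤ)
    · rw [if_pos (Or.inr hd)]
      rw [if_neg hc, if_neg (by rw [lll_big hm ha]; simpa using hd)] at h1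
      omega
    · rw [if_neg (by tauto)]
      rw [if_neg hc, if_pos ((lll_big hm ha).mpr hd)] at h1
      omega

lemma bascW_ins_neg {m : ℕ} {f : ℕ → ℤ} (hm : 1 ≤ m) (hf : wlen m f) {p : ℕ}
    (hp1 : 1 ≤ p) (hp2 : p ≤ m + 1) :
    bascW (m+1) (ins p (-((m:ℤ)+1)) f)
      = if Lll (f (p-1)) (f p) ∨ f p = -(m:ℤ) then bascW m f else bascW m f + 1 := by
  have h1 := bascW_ins hf hp1 hp2 (-((m:ℤ)+1))
  have ha := abs_all hf (p-1)
  have hb := abs_all hf p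
  rw [if_neg (not_lll_right ha)] at h1
  by_cases hc : Lll (f (p-1)) (f p)
  · have hne := (lll_ne ha hb hc).2
    rw [if_pos (Or.inl hc)]
    rw [if_pos hc, if_pos ((lll_big' hm hb).mpr hne)] at h1
    omega
  · by_cases hd : f p = -(m:ℤ)
    · rw [if_pos (Or.inr hd)]
      rw [if_neg hc, if_neg (by rw [lll_big' hm hb]; simpa using hd)] at h1
      omega
    · rw [if_neg (by tauto)]
      rw [if_neg hc, if_pos ((lll_big' hm hb).mpr hd)] at h1
      omega

lemma sum_old {m : ℕ} (f : ℕ → ℤ) :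
    ∑ p ∈ Finset.Icc 1 (m+1), (if Lll (f (p-1)) (f p) then (1:ℕ) else 0)
      = bascW m f := by
  rw [bascW_eq_sum, ← Finset.Ico_add_one_right_eq_Icc, Finset.sum_Ico_eq_sum_range]
  have h2 : m + 1 + 1 - 1 = m + 1 := by omega
  rw [h2]
  apply Finset.sum_congr rfl
  intro j _
  have e1 : 1 + j - 1 = j := by omega
  have e2 : 1 + j = j + 1 := by omega
  rw [e1, e2]

lemma sum_c1c2 {m : ℕ} {f : ℕ → ℤ} (hm : 1 ≤ m) (hf : wlen m f) :
    (∑ p ∈ Finset.Icc 1 (m+1), (if f (p-1) = (m:ℤ) then (1:ℕ) else 0))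
      + (∑ p ∈ Finset.Icc 1 (m+1), (if f p = -(m:ℤ) then (1:ℕ) else 0)) = 1 := by
  obtain ⟨q, ⟨hq1, hq2, hq3⟩, huniq⟩ :=
    exists_unique_abs_s8 hf (by exact_mod_cast hm) (le_refl _)
  have hqm : f q = (m:ℤ) ∨ f q = -(m:ℤ) := by
    rcases abs_cases (f q) with ⟨h, _⟩ | ⟨h, _⟩
    · left; omega
    · right; omega
  have hm0 : (m:ℤ) ≠ 0 := by omega
  rcases hqm with hs | hs
  · have e1 : ∑ p ∈ Finset.Icc 1 (m+1), (if f (p-1) = (m:ℤ) then (1:ℕ) else 0)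
        = ∑ p ∈ Finset.Icc 1 (m+1), (if p = q + 1 then (1:ℕ) else 0) := by
      apply Finset.sum_congr rfl
      intro p hp
      rw [Finset.mem_Icc] at hp
      by_cases he : f (p-1) = (m:ℤ)
      · have hp1 : 1 ≤ p - 1 := by
          by_contra hcon
          have : p - 1 = 0 := by omega
          rw [this, hf.1] at he
          omega
        have habs : |f (p-1)| = (m:ℤ) := by rw [he]; exact abs_of_nonneg (by omega)
        have := huniq (p-1) ⟨hp1, by omega, habs⟩
        rw [if_pos he, if_pos (by omega)]
      · rw [if_neg he, if_neg ?_]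
        intro hcon
        subst hcon
        simp only [Nat.add_sub_cancel] at he
        exact he hs
    have e2 : ∑ p ∈ Finset.Icc 1 (m+1), (if f p = -(m:ℤ) then (1:ℕ) else 0) = 0 := by
      apply Finset.sum_eq_zero
      intro p hp
      rw [Finset.mem_Icc] at hp
      rw [if_neg]
      intro he
      have hple : p ≤ m := by
        by_contra hcon
        have : f p = 0 := hf.2.1 p (by omega)
        rw [this] at he
        omega
      have habs : |f p| = (m:ℤ) := by rw [he]; rw [abs_neg]; exact abs_of_nonneg (by omega)
      have := huniq p ⟨hp.1, hple, habs⟩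
      subst this
      rw [hs] at he
      omega
    rw [e1, e2, Finset.sum_ite_eq' (Finset.Icc 1 (m+1)) (q+1) (fun _ => (1:ℕ))]
    rw [if_pos (by rw [Finset.mem_Icc]; omega)]
  · have e1 : ∑ p ∈ Finset.Icc 1 (m+1), (if f (p-1) = (m:ℤ) then (1:ℕ) else 0) = 0 := by
      apply Finset.sum_eq_zero
      intro p hp
      rw [Finset.mem_Icc] at hp
      rw [if_neg]
      intro he
      have hp1 : 1 ≤ p - 1 := by
        by_contra hcon
        have : p - 1 = 0 := by omega
        rw [this, hf.1] at he
        omega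
      have habs : |f (p-1)| = (m:ℤ) := by rw [he]; exact abs_of_nonneg (by omega)
      have := huniq (p-1) ⟨hp1, by omega, habs⟩
      rw [← this] at hs
      rw [hs] at he
      omega
    have e2 : ∑ p ∈ Finset.Icc 1 (m+1), (if f p = -(m:ℤ) then (1:ℕ) else 0)
        = ∑ p ∈ Finset.Icc 1 (m+1), (if p = q then (1:ℕ) else 0) := by
      apply Finset.sum_congr rfl
      intro p hp
      rw [Finset.mem_Icc] at hp
      by_cases he : f p = -(m:ℤ)
      · have hple : p ≤ m := by
          by_contra hcon
          have : f p = 0 := hf.2.1 p (by omega)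
          rw [this] at he
          omega
        have habs : |f p| = (m:ℤ) := by rw [he]; rw [abs_neg]; exact abs_of_nonneg (by omega)
        have := huniq p ⟨hp.1, hple, habs⟩
        rw [if_pos he, if_pos this]
      · rw [if_neg he, if_neg ?_]
        intro hcon
        subst hcon
        exact he hs
    rw [e1, e2, Finset.sum_ite_eq' (Finset.Icc 1 (m+1)) q (fun _ => (1:ℕ))]
    rw [if_pos (by rw [Finset.mem_Icc]; omega)]

noncomputable def insSet (m : ℕ) : Finset (ℕ × ℤ) :=
  (Finset.Icc 1 (m+1)) ×ˢ ({((m:ℤ)+1), -((m:ℤ)+1)} : Finset ℤ)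

lemma count_ins {m : ℕ} {f : ℕ → ℤ} (hm : 1 ≤ m) (hf : wlen m f) (K : ℕ) :
    ((insSet m).filter fun pc => bascW (m+1) (ins pc.1 pc.2 f) = K).card
      = if K = bascW m f then 2 * K + 1
        else if K = bascW m f + 1 then 2*m + 1 - 2 * bascW m f else 0 := by
  set j := bascW m f with hj
  have hne : ((m:ℤ)+1) ≠ -((m:ℤ)+1) := by omega
  have hcard : ((insSet m).filter fun pc => bascW (m+1) (ins pc.1 pc.2 f) = K).card
      = ∑ p ∈ Finset.Icc 1 (m+1),
          ((if bascW (m+1) (ins p ((m:ℤ)+1) f) = K then (1:ℕ) else 0)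
            + (if bascW (m+1) (ins p (-((m:ℤ)+1)) f) = K then (1:ℕ) else 0)) := by
    rw [Finset.card_filter, insSet, Finset.sum_product]
    apply Finset.sum_congr rfl
    intro p _
    rw [Finset.sum_pair hne]
  -- the two "good" counts
  have key : ∀ p ∈ Finset.Icc 1 (m+1),
      (bascW (m+1) (ins p ((m:ℤ)+1) f)
          = if Lll (f (p-1)) (f p) ∨ f (p-1) = (m:ℤ) then j else j + 1)
      ∧ (bascW (m+1) (ins p (-((m:ℤ)+1)) f)
          = if Lll (f (p-1)) (f p) ∨ f p = -(m:ℤ) then j else j + 1) := by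
    intro p hp
    rw [Finset.mem_Icc] at hp
    exact ⟨bascW_ins_pos hm hf hp.1 hp.2, bascW_ins_neg hm hf hp.1 hp.2⟩
  have hsumA : ∑ p ∈ Finset.Icc 1 (m+1),
      ((if Lll (f (p-1)) (f p) ∨ f (p-1) = (m:ℤ) then (1:ℕ) else 0)
        + (if Lll (f (p-1)) (f p) ∨ f p = -(m:ℤ) then (1:ℕ) else 0)) = 2 * j + 1 := by
    have hpt : ∀ p ∈ Finset.Icc 1 (m+1),
        ((if Lll (f (p-1)) (f p) ∨ f (p-1) = (m:ℤ) then (1:ℕ) else 0)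
          + (if Lll (f (p-1)) (f p) ∨ f p = -(m:ℤ) then (1:ℕ) else 0))
        = 2 * (if Lll (f (p-1)) (f p) then (1:ℕ) else 0)
          + ((if f (p-1) = (m:ℤ) then (1:ℕ) else 0) + (if f p = -(m:ℤ) then (1:ℕ) else 0)) := by
      intro p _
      have ha := abs_all hf (p-1)
      have hb := abs_all hf p
      by_cases hO : Lll (f (p-1)) (f p)
      · have h1 := (lll_ne ha hb hO).1
        have h2 := (lll_ne ha hb hO).2
        rw [if_pos (Or.inl hO), if_pos (Or.inl hO), if_pos hO, if_neg h1, if_neg h2]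
      · by_cases hC1 : f (p-1) = (m:ℤ) <;> by_cases hC2 : f p = -(m:ℤ)
        · rw [if_pos (Or.inr hC1), if_pos (Or.inr hC2), if_neg hO, if_pos hC1, if_pos hC2]
        · rw [if_pos (Or.inr hC1), if_neg (by tauto), if_neg hO, if_pos hC1, if_neg hC2]
        · rw [if_neg (by tauto), if_pos (Or.inr hC2), if_neg hO, if_neg hC1, if_pos hC2]
        · rw [if_neg (by tauto), if_neg (by tauto), if_neg hO, if_neg hC1, if_neg hC2]
    rw [Finset.sum_congr rfl hpt, Finset.sum_add_distrib, ← Finset.mul_sum,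
      Finset.sum_add_distrib, sum_old, sum_c1c2 hm hf, ← hj]
  have htot : ∑ p ∈ Finset.Icc 1 (m+1),
      (((if Lll (f (p-1)) (f p) ∨ f (p-1) = (m:ℤ) then (1:ℕ) else 0)
        + (if Lll (f (p-1)) (f p) ∨ f p = -(m:ℤ) then (1:ℕ) else 0))
      + ((if ¬(Lll (f (p-1)) (f p) ∨ f (p-1) = (m:ℤ)) then (1:ℕ) else 0)
        + (if ¬(Lll (f (p-1)) (f p) ∨ f p = -(m:ℤ)) then (1:ℕ) else 0))) = 2 * (m+1) := by
    rw [Finset.sum_congr rfl (g := fun _ => 2) ?_, Finset.sum_const, Nat.card_Icc]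
    · simp [mul_comm]
    · intro p _
      by_cases h1 : Lll (f (p-1)) (f p) ∨ f (p-1) = (m:ℤ) <;>
        by_cases h2 : Lll (f (p-1)) (f p) ∨ f p = -(m:ℤ) <;> simp [h1, h2]
  rw [hcard]
  by_cases hK : K = j
  · rw [if_pos hK]
    have : ∑ p ∈ Finset.Icc 1 (m+1),
        ((if bascW (m+1) (ins p ((m:ℤ)+1) f) = K then (1:ℕ) else 0)
          + (if bascW (m+1) (ins p (-((m:ℤ)+1)) f) = K then (1:ℕ) else 0))
        = ∑ p ∈ Finset.Icc 1 (m+1),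
        ((if Lll (f (p-1)) (f p) ∨ f (p-1) = (m:ℤ) then (1:ℕ) else 0)
          + (if Lll (f (p-1)) (f p) ∨ f p = -(m:ℤ) then (1:ℕ) else 0)) := by
      apply Finset.sum_congr rfl
      intro p hp
      rw [(key p hp).1, (key p hp).2]
      subst hK
      by_cases h1 : Lll (f (p-1)) (f p) ∨ f (p-1) = (m:ℤ) <;>
        by_cases h2 : Lll (f (p-1)) (f p) ∨ f p = -(m:ℤ) <;>
          simp [h1, h2]
    rw [this, hsumA, hK]
  · by_cases hK2 : K = j + 1
    · rw [if_neg hK, if_pos hK2]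
      have e : ∑ p ∈ Finset.Icc 1 (m+1),
          ((if bascW (m+1) (ins p ((m:ℤ)+1) f) = K then (1:ℕ) else 0)
            + (if bascW (m+1) (ins p (-((m:ℤ)+1)) f) = K then (1:ℕ) else 0))
          = ∑ p ∈ Finset.Icc 1 (m+1),
          ((if ¬(Lll (f (p-1)) (f p) ∨ f (p-1) = (m:ℤ)) then (1:ℕ) else 0)
            + (if ¬(Lll (f (p-1)) (f p) ∨ f p = -(m:ℤ)) then (1:ℕ) else 0)) := by
        apply Finset.sum_congr rfl
        intro p hp
        rw [(key p hp).1, (key p hp).2]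
        subst hK2
        by_cases h1 : Lll (f (p-1)) (f p) ∨ f (p-1) = (m:ℤ) <;>
          by_cases h2 : Lll (f (p-1)) (f p) ∨ f p = -(m:ℤ) <;>
            simp [h1, h2]
      rw [e]
      simp only [Finset.sum_add_distrib] at htot hsumA ⊢
      omega
    · rw [if_neg hK, if_neg hK2]
      apply Finset.sum_eq_zero
      intro p hp
      rw [(key p hp).1, (key p hp).2]
      by_cases h1 : Lll (f (p-1)) (f p) ∨ f (p-1) = (m:ℤ) <;>
        by_cases h2 : Lll (f (p-1)) (f p) ∨ f p = -(m:ℤ) <;>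
          simp [h1, h2] <;> omega

lemma ins_abs_char {m : ℕ} {f : ℕ → ℤ} (hf : wlen m f) {p : ℕ} {x : ℤ}
    (hp1 : 1 ≤ p) (hp2 : p ≤ m + 1) (hx : |x| = (m:ℤ)+1) :
    ∀ i, |ins p x f i| = (m:ℤ)+1 ↔ i = p := by
  intro i
  constructor
  · intro h
    by_contra hne
    rcases lt_or_gt_of_ne hne with h1 | h1
    · rw [ins_lt h1] at h
      have := abs_all hf i
      omega
    · rw [ins_gt h1] at h
      have := abs_all hf (i-1)
      omega
  · intro h; subst h; rw [ins_self]; exact hx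

lemma ins_injective {m : ℕ} {f f' : ℕ → ℤ} (hf : wlen m f) (hf' : wlen m f')
    {p p' : ℕ} {x x' : ℤ} (hp1 : 1 ≤ p) (hp2 : p ≤ m + 1) (hx : |x| = (m:ℤ)+1)
    (hp1' : 1 ≤ p') (hp2' : p' ≤ m + 1) (hx' : |x'| = (m:ℤ)+1)
    (h : ins p x f = ins p' x' f') : p = p' ∧ x = x' ∧ f = f' := by
  have hpp : p = p' := by
    have h1 := (ins_abs_char hf hp1 hp2 hx p').mp
    have h2 : |ins p x f p'| = (m:ℤ)+1 := by rw [h, ins_self]; exact hx'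
    exact (h1 h2).symm
  subst hpp
  have hxx : x = x' := by
    have : ins p x f p = ins p x' f' p := by rw [h]
    rwa [ins_self, ins_self] at this
  refine ⟨rfl, hxx, ?_⟩
  funext i
  by_cases hi : i < p
  · have : ins p x f i = ins p x' f' i := by rw [h]
    rwa [ins_lt hi, ins_lt hi] at this
  · have : ins p x f (i+1) = ins p x' f' (i+1) := by rw [h]
    rw [ins_gt (by omega), ins_gt (by omega)] at this
    simpa using this

lemma wordPsi_succ {m : ℕ} (hm : 1 ≤ m) (K : ℕ) :
    wordPsi (m+1) K = ∑ f ∈ Words m,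
      ((insSet m).filter fun pc => bascW (m+1) (ins pc.1 pc.2 f) = K).card := by
  have hsum : ∑ f ∈ Words m,
      ((insSet m).filter fun pc => bascW (m+1) (ins pc.1 pc.2 f) = K).card
      = ((Words m ×ˢ insSet m).filter
          fun z => bascW (m+1) (ins z.2.1 z.2.2 z.1) = K).card := by
    rw [Finset.card_filter, Finset.sum_product]
    apply Finset.sum_congr rfl
    intro f _
    rw [Finset.card_filter]
  rw [hsum, wordPsi]
  apply Finset.card_bij (fun z _ => ins z.2.1 z.2.2 z.1) ?_ ?_ ?_ |>.symm
  · -- maps into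
    rintro ⟨f, p, x⟩ hz
    rw [Finset.mem_filter, Finset.mem_product] at hz
    obtain ⟨⟨hfW, hpc⟩, hbasc⟩ := hz
    rw [insSet, Finset.mem_product, Finset.mem_Icc] at hpc
    dsimp only at hfW hpc hbasc
    have hxval : |x| = (m:ℤ)+1 := by
      rcases Finset.mem_insert.mp hpc.2 with h | h
      · rw [h]; rw [abs_of_nonneg (by omega)]
      · rw [Finset.mem_singleton.mp h]; rw [abs_neg, abs_of_nonneg (by omega)]
    rw [Finset.mem_filter, mem_Words]
    exact ⟨wlen_ins hm (mem_Words.mp hfW) hpc.1.1 hpc.1.2 hxval, hbasc⟩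
  · -- injectivity
    rintro ⟨f, p, x⟩ hz ⟨f', p', x'⟩ hz' heq
    rw [Finset.mem_filter, Finset.mem_product] at hz hz'
    obtain ⟨⟨hfW, hpc⟩, _⟩ := hz
    obtain ⟨⟨hfW', hpc'⟩, _⟩ := hz'
    rw [insSet, Finset.mem_product, Finset.mem_Icc] at hpc hpc'
    dsimp only at hfW hfW' hpc hpc' heq
    have hxval : |x| = (m:ℤ)+1 := by
      rcases Finset.mem_insert.mp hpc.2 with h | h
      · rw [h]; rw [abs_of_nonneg (by omega)]
      · rw [Finset.mem_singleton.mp h]; rw [abs_neg, abs_of_nonneg (by omega)]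
    have hxval' : |x'| = (m:ℤ)+1 := by
      rcases Finset.mem_insert.mp hpc'.2 with h | h
      · rw [h]; rw [abs_of_nonneg (by omega)]
      · rw [Finset.mem_singleton.mp h]; rw [abs_neg, abs_of_nonneg (by omega)]
    obtain ⟨e1, e2, e3⟩ := ins_injective (mem_Words.mp hfW) (mem_Words.mp hfW')
      hpc.1.1 hpc.1.2 hxval hpc'.1.1 hpc'.1.2 hxval' heq
    simp [e1, e2, e3, Prod.ext_iff]
  · -- surjectivity
    intro t ht
    rw [Finset.mem_filter, mem_Words] at ht
    obtain ⟨htW, htb⟩ := ht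
    obtain ⟨q, ⟨hq1, hq2, hq3⟩, huniq⟩ :=
      exists_unique_abs_s8 htW (by push_cast; omega) (le_refl _)
    set u : ℕ → ℤ := fun i => if i < q then t i else t (i+1) with hu
    have habs : ∀ i, i ≠ q → 1 ≤ i → i ≤ m + 1 → |t i| ≤ (m:ℤ) := by
      intro i hne h1 h2
      have hb := (htW.2.2.1 i h1 h2).2
      have : |t i| ≠ (m:ℤ)+1 := by
        intro hcon
        exact hne (huniq i ⟨h1, h2, hcon⟩)
      omega
    have hins : ins q (t q) u = t := by
      funext i
      rcases lt_trichotomy i q with h | h | h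
      · rw [ins_lt h, hu]; simp only [if_pos h]
      · subst h; rw [ins_self]
      · rw [ins_gt h, hu]
        simp only [if_neg (by omega : ¬ i - 1 < q)]
        congr 1
        omega
    have huW : wlen m u := by
      refine ⟨?_, ?_, ?_, ?_, ?_⟩
      · simp only [hu, if_pos (by omega : 0 < q)]; exact htW.1
      · intro i hi
        simp only [hu, if_neg (by omega : ¬ i < q)]
        exact htW.2.1 _ (by omega)
      · intro i hi1 hi2
        by_cases h : i < q
        · simp only [hu, if_pos h]
          have h1 := (htW.2.2.1 i hi1 (by omega)).1
          have h2 := habs i (by omega) hi1 (by omega)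
          exact ⟨h1, h2⟩
        · simp only [hu, if_neg h]
          have h1 := (htW.2.2.1 (i+1) (by omega) (by omega)).1
          have h2 := habs (i+1) (by omega) (by omega) (by omega)
          exact ⟨h1, h2⟩
      · intro i j hi1 hi2 hj1 hj2 hij
        by_cases h : i < q <;> by_cases h' : j < q <;>
          simp only [hu, if_pos, if_neg, h, h', if_true, if_false] at hij
        · exact htW.2.2.2.1 i j hi1 (by omega) hj1 (by omega) hij
        · have := htW.2.2.2.1 i (j+1) hi1 (by omega) (by omega) (by omega) hij
          omega
        · have := htW.2.2.2.1 (i+1) j (by omega) (by omega) hj1 (by omega) hij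
          omega
        · have := htW.2.2.2.1 (i+1) (j+1) (by omega) (by omega) (by omega) (by omega) hij
          omega
      · obtain ⟨r, hr1, hr2, hr3⟩ := htW.2.2.2.2
        have hrq : r ≠ q := by
          intro h
          subst h
          rw [hr3] at hq3
          simp at hq3
          omega
        by_cases h : r < q
        · refine ⟨r, hr1, by omega, ?_⟩
          simp only [hu, if_pos h]; exact hr3
        · refine ⟨r-1, by omega, by omega, ?_⟩
          simp only [hu, if_neg (by omega : ¬ r - 1 < q)]
          have : r - 1 + 1 = r := by omega
          rw [this]; exact hr3
    have hxpm : t q = (m:ℤ)+1 ∨ t q = -((m:ℤ)+1) := by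
      rcases abs_cases (t q) with ⟨h, _⟩ | ⟨h, _⟩
      · left; omega
      · right; omega
    refine ⟨⟨u, q, t q⟩, ?_, hins⟩
    rw [Finset.mem_filter, Finset.mem_product]
    refine ⟨⟨mem_Words.mpr huW, ?_⟩, ?_⟩
    · rw [insSet, Finset.mem_product, Finset.mem_Icc]
      refine ⟨⟨hq1, hq2⟩, ?_⟩
      rcases hxpm with h | h
      · rw [h]; exact Finset.mem_insert_self _ _
      · rw [h]; exact Finset.mem_insert.mpr (Or.inr (Finset.mem_singleton_self _))
    · show bascW (m+1) (ins q (t q) u) = K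
      rw [hins]; exact htb

lemma wlen_ne_zero {m : ℕ} {f : ℕ → ℤ} (hf : wlen m f) {t : ℕ} (h1 : 1 ≤ t) (h2 : t ≤ m) :
    f t ≠ 0 := by
  have := (hf.2.2.1 t h1 h2).1
  rcases abs_cases (f t) with ⟨h, _⟩ | ⟨h, _⟩ <;> omega

lemma bascW_le {m : ℕ} (hm : 1 ≤ m) {f : ℕ → ℤ} (hf : wlen m f) : bascW m f ≤ m := by
  by_contra hcon
  have hle : bascW m f ≤ m + 1 := by
    rw [bascW]
    calc ((Finset.range (m+1)).filter fun i => Lll (f i) (f (i+1))).card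
        ≤ (Finset.range (m+1)).card := Finset.card_filter_le _ _
      _ = m + 1 := Finset.card_range _
  have heq : ((Finset.range (m+1)).filter fun i => Lll (f i) (f (i+1)))
      = Finset.range (m+1) := by
    apply Finset.eq_of_subset_of_card_le (Finset.filter_subset _ _)
    rw [Finset.card_range]
    rw [bascW] at hcon
    omega
  have hall : ∀ i, i ≤ m → Lll (f i) (f (i+1)) := by
    intro i hi
    have : i ∈ (Finset.range (m+1)).filter fun i => Lll (f i) (f (i+1)) := by
      rw [heq, Finset.mem_range]; omega
    exact (Finset.mem_filter.mp this).2
  have hpos : ∀ i, 1 ≤ i → i ≤ m → 0 < f i := by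
    intro i
    induction i with
    | zero => omega
    | succ j ih =>
      intro _ hj
      rcases Nat.eq_zero_or_pos j with h | h
      · subst h
        have := lll_lt (hall 0 (by omega))
        rw [hf.1] at this
        simpa using this
      · have := lll_lt (hall j (by omega))
        have := ih (by omega) (by omega)
        omega
  have h1 := hpos m hm le_rfl
  have h2 := lll_lt (hall m le_rfl)
  rw [hf.2.1 (m+1) (by omega)] at h2
  omega

lemma wordPsi_zero_of_gt {m K : ℕ} (hm : 1 ≤ m) (h : m < K) : wordPsi m K = 0 := by
  rw [wordPsi, Finset.card_eq_zero]
  apply Finset.filter_false_of_mem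
  intro f hf
  have := bascW_le hm (mem_Words.mp hf)
  omega

lemma wordPsi_rec0 {m : ℕ} (hm : 1 ≤ m) : wordPsi (m+1) 0 = wordPsi m 0 := by
  rw [wordPsi_succ hm 0]
  have : ∀ f ∈ Words m,
      ((insSet m).filter fun pc => bascW (m+1) (ins pc.1 pc.2 f) = 0).card
        = if bascW m f = 0 then 1 else 0 := by
    intro f hfW
    rw [count_ins hm (mem_Words.mp hfW) 0]
    by_cases h : bascW m f = 0
    · rw [if_pos h.symm, if_pos h]
    · rw [if_neg (fun hc => h hc.symm), if_neg (by omega), if_neg h]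
  rw [Finset.sum_congr rfl this, ← Finset.sum_filter, Finset.sum_const, smul_eq_mul, mul_one,
    wordPsi]

lemma wordPsi_rec {m : ℕ} (hm : 1 ≤ m) (k : ℕ) :
    wordPsi (m+1) (k+1)
      = (2*k+3) * wordPsi m (k+1) + (2*m+1 - 2*k) * wordPsi m k := by
  rw [wordPsi_succ hm (k+1)]
  have hpt : ∀ f ∈ Words m,
      ((insSet m).filter fun pc => bascW (m+1) (ins pc.1 pc.2 f) = (k+1)).card
        = (if bascW m f = k+1 then 2*k+3 else 0) + (if bascW m f = k then 2*m+1-2*k else 0) := by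
    intro f hfW
    rw [count_ins hm (mem_Words.mp hfW) (k+1)]
    by_cases h1 : bascW m f = k+1
    · rw [if_pos h1.symm, if_pos h1, if_neg (by omega)]
      omega
    · rw [if_neg (fun hc => h1 hc.symm), if_neg h1]
      by_cases h2 : bascW m f = k
      · rw [if_pos (by omega), if_pos h2, h2]
        omega
      · rw [if_neg (by omega), if_neg h2]
  rw [Finset.sum_congr rfl hpt, Finset.sum_add_distrib,
    ← Finset.sum_filter, ← Finset.sum_filter, Finset.sum_const, Finset.sum_const,
    smul_eq_mul, smul_eq_mul, mul_comm, mul_comm ((Words m).filter fun f => bascW m f = k).card]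
  rfl



def toPermF (n : ℕ) (f : ℕ → ℤ) : ℤ → ℤ := fun i =>
  if 0 < i ∧ i ≤ (n:ℤ) then f i.toNat
  else if -(n:ℤ) ≤ i ∧ i < 0 then -f (-i).toNat
  else i

lemma toPermF_bij {n : ℕ} {f : ℕ → ℤ} (hn : 1 ≤ n) (hf : wlen n f) :
    Function.Bijective (toPermF n f) := by
  have hb : ∀ t : ℕ, 1 ≤ t → t ≤ n → (1 ≤ |f t| ∧ |f t| ≤ (n:ℤ)) := hf.2.2.1
  have hnz : ∀ t : ℕ, 1 ≤ t → t ≤ n → f t ≠ 0 := fun t h1 h2 => wlen_ne_zero hf h1 h2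
  have hinj := hf.2.2.2.1
  constructor
  · intro a b hab
    unfold toPermF at hab
    by_cases ha1 : 0 < a ∧ a ≤ (n:ℤ) <;> by_cases hb1 : 0 < b ∧ b ≤ (n:ℤ)
    · rw [if_pos ha1, if_pos hb1] at hab
      have := hinj a.toNat b.toNat (by omega) (by omega) (by omega) (by omega) (by rw [hab])
      omega
    · rw [if_pos ha1, if_neg hb1] at hab
      by_cases hb2 : -(n:ℤ) ≤ b ∧ b < 0
      · rw [if_pos hb2] at hab
        have habs : |f a.toNat| = |f (-b).toNat| := by rw [hab, abs_neg]
        have he := hinj a.toNat (-b).toNat (by omega) (by omega) (by omega) (by omega) habs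
        rw [he] at hab
        have := hnz (-b).toNat (by omega) (by omega)
        omega
      · rw [if_neg hb2] at hab
        have h1 := (hb a.toNat (by omega) (by omega)).1
        have h2 := (hb a.toNat (by omega) (by omega)).2
        rcases abs_cases (f a.toNat) with ⟨h, _⟩ | ⟨h, _⟩ <;> omega
    · rw [if_neg ha1] at hab
      by_cases ha2 : -(n:ℤ) ≤ a ∧ a < 0
      · rw [if_pos ha2, if_pos hb1] at hab
        have habs : |f (-a).toNat| = |f b.toNat| := by rw [← hab, abs_neg]
        have he := hinj (-a).toNat b.toNat (by omega) (by omega) (by omega) (by omega) habs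
        rw [he] at hab
        have := hnz b.toNat (by omega) (by omega)
        omega
      · rw [if_neg ha2, if_pos hb1] at hab
        have h1 := (hb b.toNat (by omega) (by omega)).1
        have h2 := (hb b.toNat (by omega) (by omega)).2
        rcases abs_cases (f b.toNat) with ⟨h, _⟩ | ⟨h, _⟩ <;> omega
    · by_cases ha2 : -(n:ℤ) ≤ a ∧ a < 0 <;> by_cases hb2 : -(n:ℤ) ≤ b ∧ b < 0
      · rw [if_neg ha1, if_pos ha2, if_neg hb1, if_pos hb2] at hab
        have habs : |f (-a).toNat| = |f (-b).toNat| := by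
          rw [show f (-a).toNat = - - f (-a).toNat by ring, hab]; rw [abs_neg, abs_neg]
        have := hinj (-a).toNat (-b).toNat (by omega) (by omega) (by omega) (by omega) habs
        omega
      · rw [if_neg ha1, if_pos ha2, if_neg hb1, if_neg hb2] at hab
        have h1 := (hb (-a).toNat (by omega) (by omega)).1
        have h2 := (hb (-a).toNat (by omega) (by omega)).2
        rcases abs_cases (f (-a).toNat) with ⟨h, _⟩ | ⟨h, _⟩ <;> omega
      · rw [if_neg ha1, if_neg ha2, if_neg hb1, if_pos hb2] at hab
        have h1 := (hb (-b).toNat (by omega) (by omega)).1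
        have h2 := (hb (-b).toNat (by omega) (by omega)).2
        rcases abs_cases (f (-b).toNat) with ⟨h, _⟩ | ⟨h, _⟩ <;> omega
      · rw [if_neg ha1, if_neg ha2, if_neg hb1, if_neg hb2] at hab
        exact hab
  · intro j
    by_cases hj1 : 0 < j ∧ j ≤ (n:ℤ)
    · obtain ⟨q, ⟨hq1, hq2, hq3⟩, _⟩ := exists_unique_abs_s8 hf (by omega : (1:ℤ) ≤ j) hj1.2
      rcases abs_cases (f q) with ⟨h, _⟩ | ⟨h, _⟩
      · refine ⟨(q:ℤ), ?_⟩
        unfold toPermF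
        rw [if_pos (by constructor <;> omega)]
        rw [Int.toNat_natCast]
        omega
      · refine ⟨-(q:ℤ), ?_⟩
        unfold toPermF
        rw [if_neg (by omega), if_pos (by constructor <;> omega)]
        rw [neg_neg, Int.toNat_natCast]
        omega
    · by_cases hj2 : -(n:ℤ) ≤ j ∧ j < 0
      · obtain ⟨q, ⟨hq1, hq2, hq3⟩, _⟩ :=
          exists_unique_abs_s8 hf (by omega : (1:ℤ) ≤ -j) (by omega)
        rcases abs_cases (f q) with ⟨h, _⟩ | ⟨h, _⟩
        · refine ⟨-(q:ℤ), ?_⟩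
          unfold toPermF
          rw [if_neg (by omega), if_pos (by constructor <;> omega)]
          rw [neg_neg, Int.toNat_natCast]
          omega
        · refine ⟨(q:ℤ), ?_⟩
          unfold toPermF
          rw [if_pos (by constructor <;> omega)]
          rw [Int.toNat_natCast]
          omega
      · refine ⟨j, ?_⟩
        unfold toPermF
        rw [if_neg hj1, if_neg hj2]

noncomputable def toPerm (n : ℕ) (f : ℕ → ℤ) : Equiv.Perm ℤ :=
  if h : Function.Bijective (toPermF n f) then Equiv.ofBijective _ h else 1

lemma toPerm_apply {n : ℕ} {f : ℕ → ℤ} (hn : 1 ≤ n) (hf : wlen n f) (i : ℤ) :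
    toPerm n f i = toPermF n f i := by
  rw [toPerm, dif_pos (toPermF_bij hn hf)]
  rfl

lemma toPerm_nat {n : ℕ} {f : ℕ → ℤ} (hn : 1 ≤ n) (hf : wlen n f) {i : ℕ}
    (h1 : 1 ≤ i) (h2 : i ≤ n) : toPerm n f (i:ℤ) = f i := by
  rw [toPerm_apply hn hf, toPermF, if_pos (by constructor <;> omega), Int.toNat_natCast]

lemma InXn_toPerm {n : ℕ} {f : ℕ → ℤ} (hn : 1 ≤ n) (hf : wlen n f) :
    InXn n (toPerm n f) := by
  refine ⟨⟨?_, ?_⟩, ?_⟩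
  · intro i
    rw [toPerm_apply hn hf, toPerm_apply hn hf]
    unfold toPermF
    rcases lt_trichotomy i 0 with h | h | h
    · by_cases h2 : -(n:ℤ) ≤ i
      · rw [if_pos (by constructor <;> omega), if_neg (by omega), if_pos (by constructor <;> omega)]
        omega
      · rw [if_neg (by omega), if_neg (by omega), if_neg (by omega), if_neg (by omega)]
    · subst h
      rw [if_neg (by omega), if_neg (by omega)]
      norm_num
    · by_cases h2 : i ≤ (n:ℤ)
      · rw [if_neg (by omega), if_pos (by constructor <;> omega), if_pos (by constructor <;> omega)]
        rw [neg_neg]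
      · rw [if_neg (by omega), if_neg (by omega), if_neg (by omega), if_neg (by omega)]
  · intro i hi
    rw [toPerm_apply hn hf]
    unfold toPermF
    rcases abs_cases i with ⟨h, _⟩ | ⟨h, _⟩ <;>
      rw [if_neg (by omega), if_neg (by omega)]
  · obtain ⟨q, hq1, hq2, hq3⟩ := hf.2.2.2.2
    have hw : toPerm n f (q:ℤ) = 1 := by rw [toPerm_nat hn hf hq1 hq2, hq3]
    have : (toPerm n f).symm 1 = (q:ℤ) := by
      rw [← hw, Equiv.symm_apply_apply]
    rw [this]
    omega

lemma basc_toPerm {n : ℕ} {f : ℕ → ℤ} (hn : 1 ≤ n) (hf : wlen n f) :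
    basc n (toPerm n f) = bascW n f := by
  set w := toPerm n f with hwdef
  have hwn : ∀ i : ℕ, 1 ≤ i → i ≤ n → w (i:ℤ) = f i := fun i h1 h2 => toPerm_nat hn hf h1 h2
  have hw1 : w 1 = f 1 := by
    have := hwn 1 le_rfl hn; simpa using this
  have hwnn : w (n:ℤ) = f n := hwn n hn le_rfl
  rw [basc, bascW]
  apply Finset.card_bij' (i := fun (a : ℤ) _ => if a = -1 then 0 else a.toNat)
    (j := fun (b : ℕ) _ => if b = 0 then (-1 : ℤ) else (b:ℤ))
  · -- hi : maps into target filter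
    intro a ha
    rw [Finset.mem_filter] at ha
    obtain ⟨hmem, hcond⟩ := ha
    rw [Finset.mem_filter, Finset.mem_range]
    by_cases h1 : a = -1
    · rw [if_pos h1] at hcond ⊢
      refine ⟨by omega, ?_⟩
      rw [hf.1, lll_zero_left, show (0:ℕ)+1 = 1 from rfl]
      omega
    · have hIcc : a ∈ Finset.Icc (1:ℤ) (n:ℤ) := by
        rcases Finset.mem_insert.mp hmem with h | h
        · exact absurd h h1
        · exact h
      rw [Finset.mem_Icc] at hIcc
      rw [if_neg h1] at hcond ⊢
      refine ⟨by omega, ?_⟩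
      by_cases h2 : a = (n:ℤ)
      · rw [if_pos h2] at hcond
        have e : a.toNat = n := by omega
        rw [e, hf.2.1 (n+1) (by omega), lll_zero_right]
        omega
      · rw [if_neg h2] at hcond
        have e1 : w a = f a.toNat := by
          rw [show a = ((a.toNat : ℕ) : ℤ) by omega]
          exact hwn _ (by omega) (by omega)
        have e2 : w (a+1) = f (a.toNat + 1) := by
          rw [show a + 1 = ((a.toNat + 1 : ℕ) : ℤ) by omega]
          exact hwn _ (by omega) (by omega)
        rw [← e1, ← e2]
        exact hcond
  · -- hj : reverse map into source filter
    intro b hb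
    rw [Finset.mem_filter, Finset.mem_range] at hb
    obtain ⟨hmem, hcond⟩ := hb
    rw [Finset.mem_filter]
    by_cases h1 : b = 0
    · rw [if_pos h1]
      subst h1
      rw [hf.1, lll_zero_left, show (0:ℕ)+1 = 1 from rfl] at hcond
      refine ⟨Finset.mem_insert_self _ _, ?_⟩
      rw [if_pos rfl]
      omega
    · rw [if_neg h1]
      refine ⟨Finset.mem_insert.mpr (Or.inr (by rw [Finset.mem_Icc]; omega)), ?_⟩
      rw [if_neg (by omega)]
      by_cases h2 : b = n
      · rw [if_pos (by omega : (b:ℤ) = (n:ℤ))]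
        subst h2
        rw [hf.2.1 (b+1) (by omega), lll_zero_right] at hcond
        omega
      · rw [if_neg (by omega : ¬ (b:ℤ) = (n:ℤ))]
        have e1 : w (b:ℤ) = f b := hwn b (by omega) (by omega)
        have e2 : w ((b:ℤ)+1) = f (b + 1) := by
          rw [show (b:ℤ) + 1 = ((b + 1 : ℕ) : ℤ) by omega]
          exact hwn _ (by omega) (by omega)
        rw [e1, e2]
        exact hcond
  · -- left inverse
    intro a ha
    rw [Finset.mem_filter] at ha
    by_cases h1 : a = -1
    · rw [if_pos h1, if_pos rfl, h1]
    · have hIcc : a ∈ Finset.Icc (1:ℤ) (n:ℤ) := by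
        rcases Finset.mem_insert.mp ha.1 with h | h
        · exact absurd h h1
        · exact h
      rw [Finset.mem_Icc] at hIcc
      rw [if_neg h1, if_neg (by omega), ]
      omega
  · -- right inverse
    intro b hb
    rw [Finset.mem_filter, Finset.mem_range] at hb
    by_cases h1 : b = 0
    · rw [if_pos h1, if_pos rfl]
      omega
    · rw [if_neg h1, if_neg (by omega)]
      omega

lemma wlen_window {n : ℕ} {w : Equiv.Perm ℤ} (hn : 1 ≤ n) (hw : InXn n w) :
    wlen n (fun j => if 1 ≤ j ∧ j ≤ n then w (j:ℤ) else 0) := by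
  obtain ⟨⟨hsgn, hfix⟩, hsym⟩ := hw
  have hw0 : w 0 = 0 := by
    have := hsgn 0
    simp at this
    omega
  have hnz : ∀ j : ℤ, j ≠ 0 → w j ≠ 0 := by
    intro j hj hcon
    exact hj (w.injective (by rw [hcon, hw0]))
  have hbnd : ∀ j : ℤ, |j| ≤ (n:ℤ) → |w j| ≤ (n:ℤ) := by
    intro j hj
    by_contra hcon
    have h1 : w (w j) = w j := hfix (w j) (by omega)
    rw [w.injective h1] at hcon
    exact hcon hj
  refine ⟨by norm_num, ?_, ?_, ?_, ?_⟩
  · intro i hi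
    dsimp only
    rw [if_neg (by omega)]
  · intro i h1 h2
    dsimp only
    rw [if_pos ⟨h1, h2⟩]
    have ha := hbnd (i:ℤ) (by rw [abs_of_nonneg (by omega)]; omega)
    have hb := hnz (i:ℤ) (by omega)
    rcases abs_cases (w (i:ℤ)) with ⟨h, _⟩ | ⟨h, _⟩ <;> constructor <;> omega
  · intro i j h1 h2 h3 h4 hij
    dsimp only at hij
    rw [if_pos ⟨h1, h2⟩, if_pos ⟨h3, h4⟩] at hij
    have : w (i:ℤ) = w (j:ℤ) ∨ w (i:ℤ) = - w (j:ℤ) := by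
      rcases abs_cases (w (i:ℤ)) with ⟨ha, _⟩ | ⟨ha, _⟩ <;>
        rcases abs_cases (w (j:ℤ)) with ⟨hb, _⟩ | ⟨hb, _⟩ <;> [left; right; right; left] <;> omega
    rcases this with h | h
    · have := w.injective h
      omega
    · rw [← hsgn (j:ℤ)] at h
      have := w.injective h
      omega
  · have h1 : w (w.symm 1) = 1 := w.apply_symm_apply 1
    have h2 : w.symm 1 ≤ (n:ℤ) := by
      by_contra hcon
      have hfx := hfix (w.symm 1) (by rw [abs_of_nonneg (by omega)]; omega)
      rw [hfx] at h1
      omega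
    refine ⟨(w.symm 1).toNat, by omega, by omega, ?_⟩
    dsimp only
    rw [if_pos ⟨by omega, by omega⟩, show (((w.symm 1).toNat : ℕ) : ℤ) = w.symm 1 by omega]
    exact h1

lemma toPerm_window {n : ℕ} {w : Equiv.Perm ℤ} (hn : 1 ≤ n) (hw : InXn n w) :
    toPerm n (fun j => if 1 ≤ j ∧ j ≤ n then w (j:ℤ) else 0) = w := by
  have hwlen := wlen_window hn hw
  obtain ⟨⟨hsgn, hfix⟩, hsym⟩ := hw
  have hw0 : w 0 = 0 := by
    have := hsgn 0
    simp at this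
    omega
  apply Equiv.ext
  intro i
  rw [toPerm_apply hn hwlen]
  unfold toPermF
  by_cases h1 : 0 < i ∧ i ≤ (n:ℤ)
  · rw [if_pos h1]
    dsimp only
    rw [if_pos (by omega)]
    congr 1
    omega
  · by_cases h2 : -(n:ℤ) ≤ i ∧ i < 0
    · rw [if_neg h1, if_pos h2]
      dsimp only
      rw [if_pos (by omega)]
      rw [show (((-i).toNat : ℕ) : ℤ) = -i by omega, hsgn]
      ring
    · rw [if_neg h1, if_neg h2]
      rcases eq_or_ne i 0 with h | h
      · rw [h, hw0]
      · exact (hfix i (by rcases abs_cases i with ⟨ha,_⟩|⟨ha,_⟩ <;> omega)).symm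

lemma toPerm_injOn_words {n : ℕ} (hn : 1 ≤ n) {f g : ℕ → ℤ}
    (hf : wlen n f) (hg : wlen n g) (h : toPerm n f = toPerm n g) : f = g := by
  funext i
  rcases Nat.eq_zero_or_pos i with h0 | h0
  · rw [h0, hf.1, hg.1]
  rcases le_or_gt i n with h1 | h1
  · have e1 : toPerm n f (i:ℤ) = f i := toPerm_nat hn hf h0 h1
    have e2 : toPerm n g (i:ℤ) = g i := toPerm_nat hn hg h0 h1
    rw [← e1, ← e2, h]
  · rw [hf.2.1 i h1, hg.2.1 i h1]

lemma psiN_eq_wordPsi {n : ℕ} (hn : 1 ≤ n) (k : ℕ) : psiN n k = wordPsi n k := by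
  have hset : {w : Equiv.Perm ℤ | InXn n w ∧ basc n w = k}
      = toPerm n '' (((Words n).filter fun f => bascW n f = k) : Finset (ℕ → ℤ)) := by
    ext w
    simp only [Set.mem_setOf_eq, Set.mem_image, Finset.mem_coe, Finset.mem_filter]
    constructor
    · rintro ⟨hX, hb⟩
      refine ⟨fun j => if 1 ≤ j ∧ j ≤ n then w (j:ℤ) else 0,
        ⟨mem_Words.mpr (wlen_window hn hX), ?_⟩, toPerm_window hn hX⟩
      rw [← basc_toPerm hn (wlen_window hn hX), toPerm_window hn hX]
      exact hb
    · rintro ⟨f, ⟨hfW, hfb⟩, rfl⟩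
      have hf := mem_Words.mp hfW
      exact ⟨InXn_toPerm hn hf, by rw [basc_toPerm hn hf]; exact hfb⟩
  rw [psiN, hset, Set.ncard_image_of_injOn, Set.ncard_coe_finset, wordPsi]
  intro f hfmem g hgmem hfg
  rw [Finset.mem_coe, Finset.mem_filter] at hfmem hgmem
  exact toPerm_injOn_words hn (mem_Words.mp hfmem.1) (mem_Words.mp hgmem.1) hfg

lemma psiN_zero_of_gt {n k : ℕ} (hn : 1 ≤ n) (h : n < k) : psiN n k = 0 := by
  rw [psiN_eq_wordPsi hn]; exact wordPsi_zero_of_gt hn h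

lemma coeff_PsiC {n : ℕ} (hn : 1 ≤ n) (k : ℕ) : (PsiC n).coeff k = (psiN n k : ℤ) := by
  have hexp : PsiC n = ∑ j ∈ Finset.range (n+1), (psiN n j : Polynomial ℤ) * Polynomial.X ^ j := by
    rw [PsiC]
    apply finsum_eq_sum_of_support_subset
    intro j hj
    rw [Function.mem_support] at hj
    rw [Finset.coe_range, Set.mem_Iio]
    by_contra hc
    apply hj
    rw [psiN_zero_of_gt hn (by omega)]
    simp
  rw [hexp, Polynomial.finset_sum_coeff]
  have he : ∀ j ∈ Finset.range (n+1), ((psiN n j : Polynomial ℤ) * Polynomial.X ^ j).coeff k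
      = if k = j then (psiN n j : ℤ) else 0 := by
    intro j _
    rw [← Polynomial.C_eq_natCast, Polynomial.coeff_C_mul_X_pow]
  rw [Finset.sum_congr rfl he]
  rw [Finset.sum_ite_eq (Finset.range (n+1)) k (fun j => (psiN n j : ℤ))]
  by_cases hk : k ∈ Finset.range (n+1)
  · rw [if_pos hk]
  · rw [if_neg hk, psiN_zero_of_gt hn (by rw [Finset.mem_range] at hk; omega)]
    simp

lemma psiN_rec_int {m : ℕ} (hm : 1 ≤ m) (k : ℕ) :
    (psiN (m+1) (k+1) : ℤ)
      = (2*(k:ℤ)+3) * psiN m (k+1) + (2*(m:ℤ)+1-2*(k:ℤ)) * psiN m k := by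
  rw [psiN_eq_wordPsi (by omega), psiN_eq_wordPsi hm, psiN_eq_wordPsi hm, wordPsi_rec hm k]
  by_cases hk : k ≤ m
  · push_cast [Nat.cast_sub (by omega : 2*k ≤ 2*m+1)]
    try ring
  · rw [wordPsi_zero_of_gt hm (by omega), wordPsi_zero_of_gt hm (by omega)]
    simp

lemma psiN_rec0_int {m : ℕ} (hm : 1 ≤ m) : (psiN (m+1) 0 : ℤ) = psiN m 0 := by
  rw [psiN_eq_wordPsi (by omega), psiN_eq_wordPsi hm, wordPsi_rec0 hm]


/-- Corollary: linear polynomial recurrence.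
For every `n ≥ 2`, in `ℤ[t]`:
`Ψ_{C_n}(t) = (1 + (2n-1)t) Ψ_{C_{n-1}}(t) + 2t(1-t) Ψ'_{C_{n-1}}(t)`. -/
theorem PsiC_recurrence (n : ℕ) (hn : 2 ≤ n) :
    PsiC n = (1 + Polynomial.C (2 * (n : ℤ) - 1) * Polynomial.X) * PsiC (n - 1)
      + 2 * Polynomial.X * (1 - Polynomial.X) * Polynomial.derivative (PsiC (n - 1)) := by
  
  obtain ⟨m, rfl⟩ : ∃ m, n = m + 1 := ⟨n-1, by omega⟩
  have hm : 1 ≤ m := by omega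
  have hm1 : 1 ≤ m + 1 := by omega
  have hsub : m + 1 - 1 = m := by omega
  rw [hsub]
  set c : ℤ := 2 * ((m+1 : ℕ) : ℤ) - 1 with hc
  set P := PsiC m with hP
  have hR : (1 + Polynomial.C c * Polynomial.X) * P
      + 2 * Polynomial.X * (1 - Polynomial.X) * Polynomial.derivative P
      = P + Polynomial.C c * (Polynomial.X * P)
        + 2 * (Polynomial.X * Polynomial.derivative P)
        - 2 * (Polynomial.X ^ 2 * Polynomial.derivative P) := by ring
  rw [hR]
  apply Polynomial.ext
  intro k
  have hcf : ∀ j, P.coeff j = (psiN m j : ℤ) := coeff_PsiC hm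
  rw [Polynomial.coeff_sub, Polynomial.coeff_add, Polynomial.coeff_add,
    Polynomial.coeff_C_mul]
  have h2a : (2 * (Polynomial.X * Polynomial.derivative P)).coeff k
      = 2 * (Polynomial.X * Polynomial.derivative P).coeff k := by
    simp
  have h2b : (2 * (Polynomial.X ^ 2 * Polynomial.derivative P)).coeff k
      = 2 * (Polynomial.X ^ 2 * Polynomial.derivative P).coeff k := by
    simp
  rw [h2a, h2b]
  match k with
  | 0 =>
      rw [coeff_PsiC hm1 0, Polynomial.coeff_X_mul_zero, Polynomial.coeff_X_mul_zero,
        Polynomial.coeff_X_pow_mul', if_neg (by omega)]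
      rw [psiN_rec0_int hm, hcf 0]
      ring
  | 1 =>
      rw [coeff_PsiC hm1 1,
        show (1:ℕ) = 0 + 1 from rfl, Polynomial.coeff_X_mul, Polynomial.coeff_X_mul,
        Polynomial.coeff_X_pow_mul', if_neg (by omega), Polynomial.coeff_derivative,
        psiN_rec_int hm 0, hcf, hcf, hc]
      push_cast
      ring
  | (k+2) =>
      rw [coeff_PsiC hm1 (k+2),
        show k+2 = (k+1) + 1 from rfl, Polynomial.coeff_X_mul, Polynomial.coeff_X_mul,
        show (k+1)+1 = k + 2 from rfl, Polynomial.coeff_X_pow_mul,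
        Polynomial.coeff_derivative, Polynomial.coeff_derivative,
        psiN_rec_int hm (k+1), hcf, hcf, hc]
      push_cast
      ring
end

section
/- Let n ≥ 2, 3 ≤ k ≤ 2n−1, and r ≥ 0. Then #{y ∈ ℤⁿ : 0 ≤ y_1 ≤ r, 0 ≤ y_j ≤ 2r for 2 ≤ j ≤ n, y_1+⋯+y_n = (k−1)r} = L_{n−1,k−2}(r) + L'_{n−1,k−1}(r). Consequently, L_{n,k}(r) = L'_{n,k}(r) + L_{n−1,k−2}(r) + L'_{n−1,k−1}(r). (This is the lattice-point form of the identity h*_{Δ_{C_n,k}}(t) = h*_{Δ'_{C_n,k}}(t) + (1−t)(h*_{Δ'_{C_{n−1},k−1}}(t) + h*_{Δ_{C_{n−1},k−2}}(t)).) -/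
open scoped Classical

namespace CvHO

/-- Count of `y : Fin (m+1) → ℤ` in the box `[0,2r]^{m+1}` with `c₀ ≤ y 0 ≤ c₁`
and `lo ≤ ∑ y ≤ hi`. -/
noncomputable def cntB (m r : ℕ) (c₀ c₁ lo hi : ℤ) : ℕ :=
  ((Fintype.piFinset fun _ : Fin (m + 1) => Finset.Icc (0 : ℤ) (2 * (r : ℤ))).filter
    fun y => c₀ ≤ y 0 ∧ y 0 ≤ c₁ ∧ lo ≤ ∑ j, y j ∧ ∑ j, y j ≤ hi).card

lemma sum_split (m r : ℕ) (c₀ c₁ lo mid hi : ℤ) (h1 : lo ≤ mid + 1) (h2 : mid ≤ hi) :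
    cntB m r c₀ c₁ lo hi = cntB m r c₀ c₁ lo mid + cntB m r c₀ c₁ (mid + 1) hi := by
  unfold cntB
  rw [← Finset.card_union_of_disjoint, ← Finset.filter_or]
  · apply congrArg
    apply Finset.filter_congr
    intro y _
    constructor
    · intro h; omega
    · intro h; omega
  · simp only [Finset.disjoint_left, Finset.mem_filter]
    rintro y ⟨-, h⟩ ⟨-, h'⟩
    omega

lemma cap_split (m r : ℕ) (c₀ c₁ d lo hi : ℤ) (h1 : c₀ ≤ d + 1) (h2 : d ≤ c₁) :
    cntB m r c₀ c₁ lo hi = cntB m r c₀ d lo hi + cntB m r (d + 1) c₁ lo hi := by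
  unfold cntB
  rw [← Finset.card_union_of_disjoint, ← Finset.filter_or]
  · apply congrArg
    apply Finset.filter_congr
    intro y _
    constructor
    · intro h; omega
    · intro h; omega
  · simp only [Finset.disjoint_left, Finset.mem_filter]
    rintro y ⟨-, h⟩ ⟨-, h'⟩
    omega

lemma shift (m r : ℕ) (c₀ c₁ lo hi t : ℤ) (h0 : 0 ≤ c₀ - t) (h1 : c₁ - t ≤ 2 * (r : ℤ))
    (h2 : 0 ≤ c₀) (h3 : c₁ ≤ 2 * (r : ℤ)) :
    cntB m r c₀ c₁ lo hi = cntB m r (c₀ - t) (c₁ - t) (lo - t) (hi - t) := by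
  unfold cntB
  apply Finset.card_nbij' (fun y => Fin.cons (y 0 - t) (Fin.tail y))
    (fun x => Fin.cons (x 0 + t) (Fin.tail x))
  · intro y hy
    simp only [Finset.mem_coe, Finset.mem_filter, Fintype.mem_piFinset, Finset.mem_Icc, Fin.forall_fin_succ,
      Fin.sum_univ_succ, Fin.cons_zero, Fin.cons_succ, Fin.tail] at hy ⊢
    obtain ⟨⟨hz, hrest⟩, h⟩ := hy
    exact ⟨⟨⟨by omega, by omega⟩, hrest⟩, by omega, by omega, by omega, by omega⟩
  · intro x hx
    simp only [Finset.mem_coe, Finset.mem_filter, Fintype.mem_piFinset, Finset.mem_Icc, Fin.forall_fin_succ,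
      Fin.sum_univ_succ, Fin.cons_zero, Fin.cons_succ, Fin.tail] at hx ⊢
    obtain ⟨⟨hz, hrest⟩, h⟩ := hx
    exact ⟨⟨⟨by omega, by omega⟩, hrest⟩, by omega, by omega, by omega, by omega⟩
  · intro y _
    funext j
    refine Fin.cases ?_ (fun i => ?_) j
    · simp only [Fin.cons_zero]
      ring
    · simp only [Fin.cons_succ, Fin.tail_cons, Fin.tail]
  · intro x _
    funext j
    refine Fin.cases ?_ (fun i => ?_) j
    · simp only [Fin.cons_zero]
      ring
    · simp only [Fin.cons_succ, Fin.tail_cons, Fin.tail]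

lemma ebij (m r : ℕ) (lo hi : ℤ) (h1 : 0 ≤ hi - lo) (h2 : hi - lo ≤ 2 * (r : ℤ)) :
    cntB m r 0 0 lo hi = cntB m r 0 (hi - lo) hi hi := by
  unfold cntB
  apply Finset.card_nbij' (fun y => Fin.cons (hi - ∑ j, y j) (Fin.tail y))
    (fun x => Fin.cons 0 (Fin.tail x))
  · intro y hy
    simp only [Finset.mem_coe, Finset.mem_filter, Fintype.mem_piFinset, Finset.mem_Icc, Fin.forall_fin_succ,
      Fin.sum_univ_succ, Fin.cons_zero, Fin.cons_succ, Fin.tail] at hy ⊢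
    obtain ⟨⟨hz, hrest⟩, h⟩ := hy
    exact ⟨⟨⟨by omega, by omega⟩, hrest⟩, by omega, by omega, by omega, by omega⟩
  · intro x hx
    simp only [Finset.mem_coe, Finset.mem_filter, Fintype.mem_piFinset, Finset.mem_Icc, Fin.forall_fin_succ,
      Fin.sum_univ_succ, Fin.cons_zero, Fin.cons_succ, Fin.tail] at hx ⊢
    obtain ⟨⟨hz, hrest⟩, h⟩ := hx
    exact ⟨⟨⟨by omega, by omega⟩, hrest⟩, by omega, by omega, by omega, by omega⟩
  · intro y hy
    simp only [Finset.mem_coe, Finset.mem_filter, Fintype.mem_piFinset, Finset.mem_Icc, Fin.forall_fin_succ,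
      Fin.sum_univ_succ, Fin.tail] at hy
    obtain ⟨⟨hz, hrest⟩, h⟩ := hy
    funext j
    refine Fin.cases ?_ (fun i => ?_) j
    · simp only [Fin.cons_zero]
      omega
    · simp only [Fin.cons_succ, Fin.tail_cons, Fin.tail]
  · intro x hx
    simp only [Finset.mem_coe, Finset.mem_filter, Fintype.mem_piFinset, Finset.mem_Icc, Fin.forall_fin_succ,
      Fin.sum_univ_succ, Fin.tail] at hx
    obtain ⟨⟨hz, hrest⟩, h⟩ := hx
    funext j
    refine Fin.cases ?_ (fun i => ?_) j
    · simp only [Fin.cons_zero, Fin.cons_succ, Fin.tail_cons, Fin.tail, Fin.sum_univ_succ]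
      omega
    · simp only [Fin.cons_succ, Fin.tail_cons, Fin.tail]

lemma dimdrop (m r : ℕ) (c s : ℤ) (hc : c ≤ 2 * (r : ℤ)) :
    cntB (m + 1) r 0 c s s = cntB m r 0 (2 * (r : ℤ)) (s - c) s := by
  unfold cntB
  apply Finset.card_nbij' (fun y => Fin.tail y) (fun x => Fin.cons (s - ∑ j, x j) x)
  · intro y hy
    simp only [Finset.mem_coe, Finset.mem_filter, Fintype.mem_piFinset, Finset.mem_Icc] at hy
    obtain ⟨hbox, h0, hcy, hs1, hs2⟩ := hy
    have hsum : ∑ j, y j = y 0 + ∑ j, Fin.tail y j := by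
      rw [Fin.sum_univ_succ]
      simp [Fin.tail]
    simp only [Finset.mem_coe, Finset.mem_filter, Fintype.mem_piFinset, Finset.mem_Icc]
    refine ⟨fun j => hbox j.succ, (hbox (Fin.succ 0)).1, (hbox (Fin.succ 0)).2,
      by omega, by omega⟩
  · intro x hx
    simp only [Finset.mem_coe, Finset.mem_filter, Fintype.mem_piFinset, Finset.mem_Icc, Fin.forall_fin_succ,
      Fin.sum_univ_succ, Fin.cons_zero, Fin.cons_succ, Fin.tail] at hx ⊢
    obtain ⟨hbox, h⟩ := hx
    exact ⟨⟨⟨by omega, by omega⟩, hbox⟩, by omega, by omega, by omega, by omega⟩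
  · intro y hy
    simp only [Finset.mem_coe, Finset.mem_filter, Fintype.mem_piFinset, Finset.mem_Icc] at hy
    obtain ⟨hbox, h0, hcy, hs1, hs2⟩ := hy
    have hsum : ∑ j, y j = y 0 + ∑ j, Fin.tail y j := by
      rw [Fin.sum_univ_succ]
      simp [Fin.tail]
    funext j
    refine Fin.cases ?_ (fun i => ?_) j
    · simp only [Fin.cons_zero]
      omega
    · simp only [Fin.cons_succ, Fin.tail]
  · intro x _
    exact Fin.tail_cons _ _

lemma ncard_to_cntB (m r : ℕ) (c lo hi : ℤ) :
    Set.ncard {y : Fin (m + 1) → ℤ |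
        (∀ j, 0 ≤ y j ∧ y j ≤ 2 * (r : ℤ)) ∧ (∀ j : Fin (m + 1), (j : ℕ) = 0 → y j ≤ c) ∧
        lo ≤ ∑ j, y j ∧ ∑ j, y j ≤ hi} = cntB m r 0 c lo hi := by
  have hset : {y : Fin (m + 1) → ℤ |
        (∀ j, 0 ≤ y j ∧ y j ≤ 2 * (r : ℤ)) ∧ (∀ j : Fin (m + 1), (j : ℕ) = 0 → y j ≤ c) ∧
        lo ≤ ∑ j, y j ∧ ∑ j, y j ≤ hi}
      = ↑((Fintype.piFinset fun _ : Fin (m + 1) => Finset.Icc (0 : ℤ) (2 * (r : ℤ))).filter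
          fun y => 0 ≤ y 0 ∧ y 0 ≤ c ∧ lo ≤ ∑ j, y j ∧ ∑ j, y j ≤ hi) := by
    ext y
    simp only [Set.mem_setOf_eq, Finset.coe_filter, Fintype.mem_piFinset, Finset.mem_Icc]
    constructor
    · rintro ⟨hb, hc, hs⟩
      exact ⟨hb, (hb 0).1, hc 0 (by simp), hs⟩
    · rintro ⟨hb, h0, hcap, hs⟩
      refine ⟨hb, ?_, hs⟩
      intro j hj
      have hj0 : j = 0 := Fin.ext (by simpa using hj)
      subst hj0
      exact hcap
  rw [hset, Set.ncard_coe_finset]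
  rfl

lemma ncard_to_cntB_lt (m r : ℕ) (c lo hi : ℤ) :
    Set.ncard {y : Fin (m + 1) → ℤ |
        (∀ j, 0 ≤ y j ∧ y j ≤ 2 * (r : ℤ)) ∧ (∀ j : Fin (m + 1), (j : ℕ) = 0 → y j ≤ c) ∧
        lo < ∑ j, y j ∧ ∑ j, y j ≤ hi} = cntB m r 0 c (lo + 1) hi := by
  rw [← ncard_to_cntB m r c (lo + 1) hi]
  apply congrArg
  ext y
  simp only [Set.mem_setOf_eq]
  exact and_congr_right fun _ => and_congr_right fun _ =>
    and_congr_left fun _ => by omega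

lemma ncard_to_cntB_eq (m r : ℕ) (c s : ℤ) :
    Set.ncard {y : Fin (m + 1) → ℤ |
        (∀ j, 0 ≤ y j ∧ y j ≤ 2 * (r : ℤ)) ∧ (∀ j : Fin (m + 1), (j : ℕ) = 0 → y j ≤ c) ∧
        ∑ j, y j = s} = cntB m r 0 c s s := by
  rw [← ncard_to_cntB m r c s s]
  apply congrArg
  ext y
  simp only [Set.mem_setOf_eq]
  exact and_congr_right fun _ => and_congr_right fun _ => by omega

end CvHO

/-- Closed vs. half-open hypersimplices, lattice-point form.
For `n ≥ 2`, `3 ≤ k ≤ 2n-1` and `r ≥ 0`, the number of lattice points of the slice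
`{y : sum = (k-1)r}` equals `L_{n-1,k-2}(r) + L'_{n-1,k-1}(r)`; consequently
`L_{n,k}(r) = L'_{n,k}(r) + L_{n-1,k-2}(r) + L'_{n-1,k-1}(r)`. -/
theorem closed_vs_half_open (n k r : ℕ) (hn : 2 ≤ n) (hk3 : 3 ≤ k) (hk : k ≤ 2 * n - 1) :
    Set.ncard {y : Fin n → ℤ |
        (∀ j, 0 ≤ y j ∧ y j ≤ 2 * (r : ℤ)) ∧ (∀ j : Fin n, (j : ℕ) = 0 → y j ≤ (r : ℤ)) ∧
        ∑ j, y j = ((k : ℤ) - 1) * r}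
      = Lc (n - 1) (k - 2) r + Lp (n - 1) (k - 1) r
    ∧ Lc n k r = Lp n k r + Lc (n - 1) (k - 2) r + Lp (n - 1) (k - 1) r := by
  obtain ⟨m, rfl⟩ : ∃ m, n = m + 2 := ⟨n - 2, by omega⟩
  obtain ⟨l, rfl⟩ : ∃ l, k = l + 3 := ⟨k - 3, by omega⟩
  clear hn hk3 hk
  simp only [show m + 2 - 1 = m + 1 from rfl, show l + 3 - 2 = l + 1 from rfl,
    show l + 3 - 1 = l + 2 from rfl]
  have hLc1 : Lc (m + 1) (l + 1) r = CvHO.cntB m r 0 r ((l : ℤ) * r) ((l : ℤ) * r + r) := by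
    unfold Lc
    have e1 : ((↑(l + 1) : ℤ) - 1) * r = (l : ℤ) * r := by push_cast; ring
    have e2 : ((↑(l + 1) : ℕ) : ℤ) * r = (l : ℤ) * r + r := by push_cast; ring
    rw [e1, e2]
    exact CvHO.ncard_to_cntB m r r _ _
  have hLp1 : Lp (m + 1) (l + 2) r
      = CvHO.cntB m r 0 r ((l : ℤ) * r + r + 1) ((l : ℤ) * r + 2 * r) := by
    unfold Lp
    have hne : ¬(l + 2 = 1) := by omega
    rw [if_neg hne]
    have e1 : ((↑(l + 2) : ℤ) - 1) * r = (l : ℤ) * r + r := by push_cast; ring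
    have e2 : ((↑(l + 2) : ℕ) : ℤ) * r = (l : ℤ) * r + 2 * r := by push_cast; ring
    rw [e1, e2]
    exact CvHO.ncard_to_cntB_lt m r r _ _
  have hLcBig : Lc (m + 2) (l + 3) r
      = CvHO.cntB (m + 1) r 0 r ((l : ℤ) * r + 2 * r) ((l : ℤ) * r + 3 * r) := by
    unfold Lc
    have e1 : ((↑(l + 3) : ℤ) - 1) * r = (l : ℤ) * r + 2 * r := by push_cast; ring
    have e2 : ((↑(l + 3) : ℕ) : ℤ) * r = (l : ℤ) * r + 3 * r := by push_cast; ring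
    rw [e1, e2]
    exact CvHO.ncard_to_cntB (m + 1) r r _ _
  have hLpBig : Lp (m + 2) (l + 3) r
      = CvHO.cntB (m + 1) r 0 r ((l : ℤ) * r + 2 * r + 1) ((l : ℤ) * r + 3 * r) := by
    unfold Lp
    have hne : ¬(l + 3 = 1) := by omega
    rw [if_neg hne]
    have e1 : ((↑(l + 3) : ℤ) - 1) * r = (l : ℤ) * r + 2 * r := by push_cast; ring
    have e2 : ((↑(l + 3) : ℕ) : ℤ) * r = (l : ℤ) * r + 3 * r := by push_cast; ring
    rw [e1, e2]
    exact CvHO.ncard_to_cntB_lt (m + 1) r r _ _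
  have h1 : CvHO.cntB (m + 1) r 0 r ((l : ℤ) * r + 2 * r) ((l : ℤ) * r + 2 * r)
      = CvHO.cntB m r 0 (2 * (r : ℤ)) ((l : ℤ) * r + r) ((l : ℤ) * r + 2 * r) := by
    have := CvHO.dimdrop m r (r : ℤ) ((l : ℤ) * r + 2 * r) (by omega)
    rwa [show (l : ℤ) * r + 2 * r - r = (l : ℤ) * r + r by ring] at this
  have h2 := CvHO.cap_split m r 0 (2 * (r : ℤ)) (r : ℤ)
    ((l : ℤ) * r + r) ((l : ℤ) * r + 2 * r) (by omega) (by omega)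
  have h3 : CvHO.cntB m r ((r : ℤ) + 1) (2 * (r : ℤ)) ((l : ℤ) * r + r) ((l : ℤ) * r + 2 * r)
      = CvHO.cntB m r 1 (r : ℤ) ((l : ℤ) * r) ((l : ℤ) * r + r) := by
    have := CvHO.shift m r ((r : ℤ) + 1) (2 * (r : ℤ)) ((l : ℤ) * r + r) ((l : ℤ) * r + 2 * r)
      (r : ℤ) (by omega) (by omega) (by omega) (by omega)
    rwa [show (r : ℤ) + 1 - r = (1 : ℤ) by ring, show 2 * (r : ℤ) - r = (r : ℤ) by ring,
      show (l : ℤ) * r + r - r = (l : ℤ) * r by ring,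
      show (l : ℤ) * r + 2 * r - r = (l : ℤ) * r + r by ring] at this
  have h4 := CvHO.cap_split m r 0 (r : ℤ) 0 ((l : ℤ) * r) ((l : ℤ) * r + r) (by omega) (by omega)
  rw [show (0 : ℤ) + 1 = 1 by ring] at h4
  have h5 : CvHO.cntB m r 0 0 ((l : ℤ) * r) ((l : ℤ) * r + r)
      = CvHO.cntB m r 0 (r : ℤ) ((l : ℤ) * r + r) ((l : ℤ) * r + r) := by
    have := CvHO.ebij m r ((l : ℤ) * r) ((l : ℤ) * r + r) (by omega) (by omega)
    rwa [show (l : ℤ) * r + r - (l : ℤ) * r = (r : ℤ) by ring] at this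
  have h6 := CvHO.sum_split m r 0 (r : ℤ) ((l : ℤ) * r) ((l : ℤ) * r + r - 1) ((l : ℤ) * r + r)
    (by omega) (by omega)
  rw [show (l : ℤ) * r + r - 1 + 1 = (l : ℤ) * r + r by ring] at h6
  have h7 := CvHO.sum_split m r 0 (r : ℤ) ((l : ℤ) * r + r) ((l : ℤ) * r + r)
    ((l : ℤ) * r + 2 * r) (by omega) (by omega)
  have hbig := CvHO.sum_split (m + 1) r 0 (r : ℤ) ((l : ℤ) * r + 2 * r) ((l : ℤ) * r + 2 * r)
    ((l : ℤ) * r + 3 * r) (by omega) (by omega)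
  have hS : Set.ncard {y : Fin (m + 2) → ℤ |
        (∀ j, 0 ≤ y j ∧ y j ≤ 2 * (r : ℤ)) ∧ (∀ j : Fin (m + 2), (j : ℕ) = 0 → y j ≤ (r : ℤ)) ∧
        ∑ j, y j = ((↑(l + 3) : ℤ) - 1) * r}
      = CvHO.cntB (m + 1) r 0 r ((l : ℤ) * r + 2 * r) ((l : ℤ) * r + 2 * r) := by
    have e : ((↑(l + 3) : ℤ) - 1) * r = (l : ℤ) * r + 2 * r := by push_cast; ring
    rw [e]
    exact CvHO.ncard_to_cntB_eq (m + 1) r r _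
  constructor
  · rw [hS, hLc1, hLp1]
    clear hS
    omega
  · rw [hLcBig, hLpBig, hLc1, hLp1]
    clear hS
    omega
end

section
/- For every n ≥ 1 and every w ∈ X_n, the following are equivalent: (a) cdes(w⁻¹) ≤ 2; (b) there exists k ∈ {1,…,n} such that the subsequence of positive entries of w_1⋯w_n, read left to right, is exactly (1, 2, …, k) and the subsequence of negative entries, read left to right, is exactly (−n, −n+1, …, −(k+1)); that is, w is a shuffle of the words 1 2 ⋯ k and (−n)(−n+1)⋯(−(k+1)). -/
open scoped Classical

lemma symm_neg (w : Equiv.Perm ℤ) (h : ∀ i : ℤ, w (-i) = -w i) (i : ℤ) :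
    w.symm (-i) = -w.symm i := by
  apply w.injective
  rw [Equiv.apply_symm_apply, h, Equiv.apply_symm_apply]

lemma chain_lt {f : ℤ → ℤ} {a b : ℤ} (h : ∀ i, a ≤ i → i < b → f i < f (i + 1)) :
    ∀ i j, a ≤ i → i < j → j ≤ b → f i < f j := by
  intro i j hai hij hjb
  have key : ∀ m : ℤ, i + 1 ≤ m → (m ≤ b → f i < f m) := by
    refine Int.le_induction ?_ ?_
    · intro hb
      exact h i hai (by omega)
    · intro m hm ih hb
      exact (ih (by omega)).trans (h m (by omega) (by omega))
  exact key j (by omega) hjb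

lemma uprops_to_cdes (n : ℕ) (u : Equiv.Perm ℤ) (hus : ∀ i : ℤ, u (-i) = -u i)
    (k : ℤ) (hk1 : 1 ≤ k) (hkn : k ≤ (n : ℤ))
    (hpos : ∀ i, 1 ≤ i → i ≤ k → 0 < u i)
    (hneg : ∀ i, k < i → i ≤ (n : ℤ) → u i < 0)
    (hm1 : ∀ i j, 1 ≤ i → i < j → j ≤ k → u i < u j)
    (hm2 : ∀ i j, k < i → i < j → j ≤ (n : ℤ) → u i < u j) :
    cdes n u ≤ 2 := by
  have hsub : cdesSet n u ⊆ {k, -(k + 1)} := by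
    intro i hi
    simp only [cdesSet, Finset.mem_filter, Finset.mem_Icc] at hi
    obtain ⟨⟨hil, hir⟩, hi0, hdesc⟩ := hi
    simp only [Finset.mem_insert, Finset.mem_singleton]
    by_cases h1 : i = -1
    · exfalso
      subst h1
      have hc : csucc n (-1) = 1 := by simp [csucc]
      rw [hc] at hdesc
      have e : u (-1) = -u 1 := hus 1
      have hp := hpos 1 (le_refl 1) hk1
      omega
    · by_cases h2 : i = (n : ℤ)
      · subst h2
        have hc : csucc n (n : ℤ) = -(n : ℤ) := by
          unfold csucc; rw [if_neg (by omega), if_pos rfl]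
        rw [hc] at hdesc
        have e : u (-(n : ℤ)) = -u (n : ℤ) := hus n
        have hk : k = (n : ℤ) := by
          by_contra h
          have := hneg n (by omega) le_rfl
          omega
        left; omega
      · have hc : csucc n i = i + 1 := by unfold csucc; rw [if_neg h1, if_neg h2]
        rw [hc] at hdesc
        by_cases h3 : 0 < i
        · left
          by_contra hik
          rcases lt_or_gt_of_ne hik with hlt | hgt
          · have := hm1 i (i + 1) (by omega) (by omega) (by omega)
            omega
          · have := hm2 i (i + 1) hgt (by omega) (by omega)
            omega
        · right
          have ei : u i = -u (-i) := by
            have := hus (-i); rw [neg_neg] at this; omega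
          have ei1 : u (i + 1) = -u (-(i + 1)) := by
            have := hus (-(i + 1)); rw [neg_neg] at this; omega
          by_contra hik
          by_cases hA : -i ≤ k
          · have := hm1 (-(i + 1)) (-i) (by omega) (by omega) hA
            omega
          · have hB : k < -(i + 1) := by omega
            have := hm2 (-(i + 1)) (-i) hB (by omega) (by omega)
            omega
  calc cdes n u ≤ ({k, -(k + 1)} : Finset ℤ).card := Finset.card_le_card hsub
    _ ≤ 2 := le_trans (Finset.card_insert_le _ _) (by simp)

lemma cdes_to_uprops (n : ℕ) (hn : 1 ≤ n) (u : Equiv.Perm ℤ)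
    (hus : ∀ i : ℤ, u (-i) = -u i) (hu1 : 0 < u 1) (h2 : cdes n u ≤ 2) :
    ∃ k : ℤ, 1 ≤ k ∧ k ≤ (n : ℤ) ∧
      (∀ i, 1 ≤ i → i ≤ k → 0 < u i) ∧
      (∀ i, k < i → i ≤ (n : ℤ) → u i < 0) ∧
      (∀ i j, 1 ≤ i → i < j → j ≤ k → u i < u j) ∧
      (∀ i j, k < i → i < j → j ≤ (n : ℤ) → u i < u j) := by
  classical
  have h2' : (cdesSet n u).card ≤ 2 := h2
  have hu0 : u 0 = 0 := by
    have := hus 0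
    rw [neg_zero] at this
    omega
  set D := (Finset.Icc (1 : ℤ) ((n : ℤ) - 1)).filter (fun i => u (i + 1) < u i) with hD
  have hmemD : ∀ i, i ∈ D ↔ (1 ≤ i ∧ i ≤ (n : ℤ) - 1 ∧ u (i + 1) < u i) := by
    intro i
    simp [hD, Finset.mem_filter, Finset.mem_Icc, and_assoc]
  have hDsub : ∀ i ∈ D, i ∈ cdesSet n u := by
    intro i hi
    rw [hmemD] at hi
    simp only [cdesSet, Finset.mem_filter, Finset.mem_Icc]
    have hc : csucc n i = i + 1 := by
      unfold csucc; rw [if_neg (by omega), if_neg (by omega)]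
    exact ⟨⟨by omega, by omega⟩, by omega, by rw [hc]; exact hi.2.2⟩
  have hDsub2 : ∀ i ∈ D, -(i + 1) ∈ cdesSet n u := by
    intro i hi
    rw [hmemD] at hi
    simp only [cdesSet, Finset.mem_filter, Finset.mem_Icc]
    have hc : csucc n (-(i + 1)) = -(i + 1) + 1 := by
      unfold csucc; rw [if_neg (by omega), if_neg (by omega)]
    have e1 : u (-(i + 1) + 1) = -u i := by
      have h : (-(i + 1) + 1) = -i := by ring
      rw [h, hus]
    have e2 : u (-(i + 1)) = -u (i + 1) := hus (i + 1)
    refine ⟨⟨by omega, by omega⟩, by omega, ?_⟩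
    rw [hc, e1, e2]
    omega
  have hcard1 : D.card ≤ 1 := by
    by_contra hc
    push_neg at hc
    obtain ⟨a, ha, b, hb, hab⟩ := Finset.one_lt_card.mp hc
    have ha' := (hmemD a).mp ha
    have hb' := (hmemD b).mp hb
    have h3 : ({a, b, -(a + 1)} : Finset ℤ) ⊆ cdesSet n u := by
      intro x hx
      simp only [Finset.mem_insert, Finset.mem_singleton] at hx
      rcases hx with h | h | h
      · rw [h]; exact hDsub a ha
      · rw [h]; exact hDsub b hb
      · rw [h]; exact hDsub2 a ha
    have hcard3 : ({a, b, -(a + 1)} : Finset ℤ).card = 3 := by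
      have n1 : a ∉ ({b, -(a + 1)} : Finset ℤ) := by
        simp only [Finset.mem_insert, Finset.mem_singleton]
        omega
      have n2 : b ∉ ({-(a + 1)} : Finset ℤ) := by
        simp only [Finset.mem_singleton]
        omega
      rw [Finset.card_insert_of_notMem n1, Finset.card_insert_of_notMem n2,
        Finset.card_singleton]
    have h4 := Finset.card_le_card h3
    omega
  rcases Finset.eq_empty_or_nonempty D with hDe | ⟨d, hd⟩
  · have hadj : ∀ i, 1 ≤ i → i < (n : ℤ) → u i < u (i + 1) := by
      intro i h1 hin
      have hni : i ∉ D := by rw [hDe]; exact Finset.notMem_empty i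
      rw [hmemD] at hni
      push_neg at hni
      have hne : u (i + 1) ≠ u i := fun h => by
        have := u.injective h; omega
      have := hni h1 (by omega)
      omega
    have hmono : ∀ i j, (1 : ℤ) ≤ i → i < j → j ≤ (n : ℤ) → u i < u j :=
      chain_lt (f := fun i => u i) hadj
    refine ⟨n, by exact_mod_cast hn, le_refl _, ?_, ?_, hmono, ?_⟩
    · intro i h1 h2
      rcases eq_or_lt_of_le h1 with he | hlt
      · rw [← he]; exact hu1
      · have := hmono 1 i (le_refl 1) hlt h2
        omega
    · intro i hi h2
      omega
    · intro i j hi hij hjn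
      omega
  · have honly := Finset.card_le_one.mp hcard1
    have hd' := (hmemD d).mp hd
    have hadj : ∀ i, 1 ≤ i → i < (n : ℤ) → i ≠ d → u i < u (i + 1) := by
      intro i h1 hin hne
      have hni : i ∉ D := fun h => hne (honly i h d hd)
      rw [hmemD] at hni
      push_neg at hni
      have hne2 : u (i + 1) ≠ u i := fun h => by
        have := u.injective h; omega
      have := hni h1 (by omega)
      omega
    have hun : u (n : ℤ) < 0 := by
      have hunne : u (n : ℤ) ≠ 0 := fun h => by
        have : (n : ℤ) = 0 := u.injective (h.trans hu0.symm)
        omega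
      by_contra hc
      push_neg at hc
      have hnmem : (n : ℤ) ∈ cdesSet n u := by
        simp only [cdesSet, Finset.mem_filter, Finset.mem_Icc]
        have hcs : csucc n (n : ℤ) = -(n : ℤ) := by
          unfold csucc; rw [if_neg (by omega), if_pos rfl]
        have e := hus (n : ℤ)
        exact ⟨⟨by omega, le_refl _⟩, by omega, by rw [hcs, e]; omega⟩
      have h3 : ({d, -(d + 1), (n : ℤ)} : Finset ℤ) ⊆ cdesSet n u := by
        intro x hx
        simp only [Finset.mem_insert, Finset.mem_singleton] at hx
        rcases hx with h | h | h
        · rw [h]; exact hDsub d hd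
        · rw [h]; exact hDsub2 d hd
        · rw [h]; exact hnmem
      have hcard3 : ({d, -(d + 1), (n : ℤ)} : Finset ℤ).card = 3 := by
        have n1 : d ∉ ({-(d + 1), (n : ℤ)} : Finset ℤ) := by
          simp only [Finset.mem_insert, Finset.mem_singleton]
          omega
        have n2 : -(d + 1) ∉ ({(n : ℤ)} : Finset ℤ) := by
          simp only [Finset.mem_singleton]
          omega
        rw [Finset.card_insert_of_notMem n1, Finset.card_insert_of_notMem n2,
          Finset.card_singleton]
      have h4 := Finset.card_le_card h3
      omega
    have hm1 : ∀ i j, 1 ≤ i → i < j → j ≤ d → u i < u j :=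
      chain_lt (f := fun i => u i) (fun i hi1 hid => hadj i hi1 (by omega) (by omega))
    have hm2 : ∀ i j, d < i → i < j → j ≤ (n : ℤ) → u i < u j := by
      have key : ∀ i j, d + 1 ≤ i → i < j → j ≤ (n : ℤ) → u i < u j :=
        chain_lt (f := fun i => u i) (fun i hi1 hin => hadj i (by omega) hin (by omega))
      intro i j h1 hij h3
      exact key i j (by omega) hij h3
    refine ⟨d, by omega, by omega, ?_, ?_, hm1, hm2⟩
    · intro i h1 h2
      rcases eq_or_lt_of_le h1 with he | hlt
      · rw [← he]; exact hu1
      · have := hm1 1 i (le_refl 1) hlt h2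
        omega
    · intro i hdi hin
      rcases eq_or_lt_of_le hin with he | hlt
      · rw [he]; exact hun
      · have := hm2 i n hdi hlt le_rfl
        omega

lemma uprops_to_shuffle (n : ℕ) (w : Equiv.Perm ℤ) (hsp : IsSignedPerm n w) (k : ℤ)
    (hk1 : 1 ≤ k) (hkn : k ≤ (n : ℤ))
    (hpos : ∀ i, 1 ≤ i → i ≤ k → 0 < w.symm i)
    (hneg : ∀ i, k < i → i ≤ (n : ℤ) → w.symm i < 0)
    (hm1 : ∀ i j, 1 ≤ i → i < j → j ≤ k → w.symm i < w.symm j)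
    (hm2 : ∀ i j, k < i → i < j → j ≤ (n : ℤ) → w.symm i < w.symm j) :
    (∀ i j : ℤ, 1 ≤ i → i < j → j ≤ (n : ℤ) → 0 < w i → 0 < w j → w i < w j) ∧
    (∀ i j : ℤ, 1 ≤ i → i < j → j ≤ (n : ℤ) → w i < 0 → w j < 0 → w i < w j) ∧
    (∀ i : ℤ, 1 ≤ i → i ≤ (n : ℤ) → 0 < w i → w i ≤ k) ∧
    (∀ i : ℤ, 1 ≤ i → i ≤ (n : ℤ) → w i < 0 → w i ≤ -(k + 1)) := by
  have hwbd : ∀ i : ℤ, -(n : ℤ) ≤ i → i ≤ (n : ℤ) → -(n : ℤ) ≤ w i ∧ w i ≤ (n : ℤ) := by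
    intro i h1 h2
    by_contra hc
    have h3 : (n : ℤ) < |w i| := by rw [lt_abs]; omega
    have h4 : w i = i := w.injective (hsp.2 (w i) h3)
    omega
  have hik : ∀ i : ℤ, 1 ≤ i → i ≤ (n : ℤ) → 0 < w i → w i ≤ k := by
    intro i h1 h2 hwi
    have hb := hwbd i (by omega) h2
    have hui : w.symm (w i) = i := w.symm_apply_apply i
    by_contra hc
    have := hneg (w i) (by omega) (by omega)
    omega
  have hik' : ∀ i : ℤ, 1 ≤ i → i ≤ (n : ℤ) → w i < 0 → k < -(w i) := by
    intro i h1 h2 hwi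
    have hb := hwbd i (by omega) h2
    have e1 : w.symm (-(w i)) = -i := by
      rw [← hsp.1 i]; exact w.symm_apply_apply (-i)
    by_contra hc
    have := hpos (-(w i)) (by omega) (by omega)
    omega
  refine ⟨?_, ?_, hik, fun i h1 h2 hwi => by have := hik' i h1 h2 hwi; omega⟩
  · intro i j h1 hij hj hwi hwj
    have hbi := hwbd i (by omega) (by omega)
    have hbj := hwbd j (by omega) (by omega)
    have hui : w.symm (w i) = i := w.symm_apply_apply i
    have huj : w.symm (w j) = j := w.symm_apply_apply j
    have haik := hik i (by omega) (by omega) hwi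
    have hajk := hik j (by omega) hj hwj
    by_contra hc
    push_neg at hc
    rcases eq_or_lt_of_le hc with he | hl
    · have : j = i := w.injective he
      omega
    · have := hm1 (w j) (w i) (by omega) hl haik
      omega
  · intro i j h1 hij hj hwi hwj
    have hbi := hwbd i (by omega) (by omega)
    have hbj := hwbd j (by omega) (by omega)
    have ei : w.symm (-(w i)) = -i := by
      rw [← hsp.1 i]; exact w.symm_apply_apply (-i)
    have ej : w.symm (-(w j)) = -j := by
      rw [← hsp.1 j]; exact w.symm_apply_apply (-j)
    have haik := hik' i (by omega) (by omega) hwi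
    have hajk := hik' j (by omega) hj hwj
    by_contra hc
    push_neg at hc
    rcases eq_or_lt_of_le hc with he | hl
    · have : j = i := w.injective he
      omega
    · have := hm2 (-(w i)) (-(w j)) haik (by omega) (by omega)
      omega

lemma shuffle_to_uprops (n : ℕ) (w : Equiv.Perm ℤ) (hsp : IsSignedPerm n w)
    (k : ℤ) (hk1 : 1 ≤ k) (hkn : k ≤ (n : ℤ))
    (hpm : ∀ i j : ℤ, 1 ≤ i → i < j → j ≤ (n : ℤ) → 0 < w i → 0 < w j → w i < w j)
    (hnm : ∀ i j : ℤ, 1 ≤ i → i < j → j ≤ (n : ℤ) → w i < 0 → w j < 0 → w i < w j)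
    (hpb : ∀ i : ℤ, 1 ≤ i → i ≤ (n : ℤ) → 0 < w i → w i ≤ k)
    (hnb : ∀ i : ℤ, 1 ≤ i → i ≤ (n : ℤ) → w i < 0 → w i ≤ -(k + 1)) :
    (∀ i, 1 ≤ i → i ≤ k → 0 < w.symm i) ∧
    (∀ i, k < i → i ≤ (n : ℤ) → w.symm i < 0) ∧
    (∀ i j, 1 ≤ i → i < j → j ≤ k → w.symm i < w.symm j) ∧
    (∀ i j, k < i → i < j → j ≤ (n : ℤ) → w.symm i < w.symm j) := by
  have hw0 : w 0 = 0 := by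
    have := hsp.1 0
    rw [neg_zero] at this
    omega
  have hubd : ∀ i : ℤ, 1 ≤ i → i ≤ (n : ℤ) →
      (-(n : ℤ) ≤ w.symm i ∧ w.symm i ≤ (n : ℤ) ∧ w.symm i ≠ 0) := by
    intro i h1 h2
    have hap : w (w.symm i) = i := w.apply_symm_apply i
    have hne : w.symm i ≠ 0 := by
      intro h0
      rw [h0, hw0] at hap
      omega
    refine ⟨?_, ?_, hne⟩ <;>
    · by_contra hc
      have h3 : (n : ℤ) < |w.symm i| := by rw [lt_abs]; omega
      have h5 : w.symm i = i := (hsp.2 _ h3).symm.trans hap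
      omega
  have hpos : ∀ i, 1 ≤ i → i ≤ k → 0 < w.symm i := by
    intro i h1 h2
    have hap : w (w.symm i) = i := w.apply_symm_apply i
    obtain ⟨hb1, hb2, hb3⟩ := hubd i h1 (le_trans h2 hkn)
    by_contra hc
    push_neg at hc
    have hneg1 : w (-(w.symm i)) = -i := by rw [hsp.1, hap]
    have := hnb (-(w.symm i)) (by omega) (by omega) (by rw [hneg1]; omega)
    omega
  have hneg : ∀ i, k < i → i ≤ (n : ℤ) → w.symm i < 0 := by
    intro i hki h2
    obtain ⟨hb1, hb2, hb3⟩ := hubd i (by omega) h2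
    have hap : w (w.symm i) = i := w.apply_symm_apply i
    by_contra hc
    push_neg at hc
    have := hpb (w.symm i) (by omega) (by omega) (by rw [hap]; omega)
    omega
  refine ⟨hpos, hneg, ?_, ?_⟩
  · intro i j h1 hij hjk
    have hpi := hpos i h1 (by omega)
    have hpj := hpos j (by omega) hjk
    obtain ⟨_, hbi2, _⟩ := hubd i h1 (by omega)
    obtain ⟨_, hbj2, _⟩ := hubd j (by omega) (by omega)
    have hapi : w (w.symm i) = i := w.apply_symm_apply i
    have hapj : w (w.symm j) = j := w.apply_symm_apply j
    by_contra hc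
    push_neg at hc
    rcases eq_or_lt_of_le hc with he | hl
    · have : j = i := w.symm.injective he
      omega
    · have := hpm (w.symm j) (w.symm i) (by omega) hl (by omega)
        (by rw [hapj]; omega) (by rw [hapi]; omega)
      omega
  · intro i j hki hij hjn
    have hni := hneg i hki (by omega)
    have hnj := hneg j (by omega) hjn
    obtain ⟨hbi1, _, _⟩ := hubd i (by omega) (by omega)
    obtain ⟨hbj1, _, _⟩ := hubd j (by omega) hjn
    have ei : w (-(w.symm i)) = -i := by rw [hsp.1, w.apply_symm_apply]
    have ej : w (-(w.symm j)) = -j := by rw [hsp.1, w.apply_symm_apply]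
    by_contra hc
    push_neg at hc
    rcases eq_or_lt_of_le hc with he | hl
    · have : j = i := w.symm.injective he
      omega
    · have := hnm (-(w.symm i)) (-(w.symm j)) (by omega) (by omega) (by omega)
        (by rw [ei]; omega) (by rw [ej]; omega)
      omega

/-- For `w ∈ X_n`: `cdes(w⁻¹) ≤ 2` if and only if the window of `w`
is a shuffle of the words `1 2 ⋯ k` and `(-n)(-n+1)⋯(-(k+1))` for some `1 ≤ k ≤ n`,
i.e. the positive entries, read left to right, are exactly `1, 2, …, k` and the
negative entries, read left to right, are exactly `-n, -n+1, …, -(k+1)`. -/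
theorem cdes_le_two_iff_shuffle (n : ℕ) (hn : 1 ≤ n) (w : Equiv.Perm ℤ) (hw : InXn n w) :
    cdes n w.symm ≤ 2 ↔
      ∃ k : ℤ, 1 ≤ k ∧ k ≤ (n : ℤ) ∧
        (∀ i j : ℤ, 1 ≤ i → i < j → j ≤ (n : ℤ) → 0 < w i → 0 < w j → w i < w j) ∧
        (∀ i j : ℤ, 1 ≤ i → i < j → j ≤ (n : ℤ) → w i < 0 → w j < 0 → w i < w j) ∧
        (∀ i : ℤ, 1 ≤ i → i ≤ (n : ℤ) → 0 < w i → w i ≤ k) ∧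
        (∀ i : ℤ, 1 ≤ i → i ≤ (n : ℤ) → w i < 0 → w i ≤ -(k + 1)) := by
  obtain ⟨hsp, hx⟩ := hw
  constructor
  · intro h2
    obtain ⟨k, hk1, hkn, hpos, hneg, hm1, hm2⟩ :=
      cdes_to_uprops n hn w.symm (symm_neg w hsp.1) hx h2
    obtain ⟨a, b, c, d4⟩ := uprops_to_shuffle n w hsp k hk1 hkn hpos hneg hm1 hm2
    exact ⟨k, hk1, hkn, a, b, c, d4⟩
  · rintro ⟨k, hk1, hkn, hpm, hnm, hpb, hnb⟩
    obtain ⟨hpos, hneg, hm1, hm2⟩ := shuffle_to_uprops n w hsp k hk1 hkn hpm hnm hpb hnb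
    exact uprops_to_cdes n w.symm (symm_neg w hsp.1) k hk1 hkn hpos hneg hm1 hm2
end
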